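/- arXiv:2101.01354 — 3 statements merged into one kernel-verified Lean document; each statement's English description precedes it below -/
import Mathlib

section
/- Let G be a finite simple graph on a finite nonempty vertex set that is not a complete graph, with maximum degree Δ(G) ≥ 9 and chromatic number χ(G) > max{Δ(G) − 1, ω(G)}, and suppose G is minimal with this property, i.e., every simple graph H with strictly fewer vertices and Δ(H) ≥ 9 that is not complete satisfies χ(H) ≤ max{Δ(H) − 1, ω(H)}. Then for every vertex u of G, the graph G − u obtained by deleting u satisfies χ(G − u) = χ(G) − 1. -/
open SimpleGraph Finset

set_option linter.unusedSectionVars false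

section helpers
variable {V : Type} [Fintype V] [DecidableEq V] (G : SimpleGraph V) [DecidableRel G.Adj]

instance indDec (s : Set V) [DecidablePred (· ∈ s)] : DecidableRel (G.induce s).Adj :=
  fun a b => ‹DecidableRel G.Adj› _ _

lemma degree_induce_le (s : Set V) [DecidablePred (· ∈ s)] (v : s) :
    (G.induce s).degree v ≤ G.degree ↑v := by
  show ((G.induce s).neighborFinset v).card ≤ (G.neighborFinset ↑v).card
  refine Finset.card_le_card_of_injOn (fun w => (w : V)) ?_ ?_
  · intro w hw
    simp only [Finset.mem_coe, mem_neighborFinset] at hw ⊢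
    exact hw
  · intro a _ b _ h
    exact Subtype.ext h

lemma maxDegree_induce_le (s : Set V) [DecidablePred (· ∈ s)] :
    (G.induce s).maxDegree ≤ G.maxDegree := by
  apply maxDegree_le_of_forall_degree_le
  intro v
  exact le_trans (degree_induce_le G s v) (G.degree_le_maxDegree _)

lemma clique_induce_map {s : Set V} {n : ℕ} {t : Finset s}
    (h : (G.induce s).IsNClique n t) :
    G.IsNClique n (t.image (Subtype.val : s → V)) := by
  constructor
  · intro a ha b hb hab
    simp only [Finset.coe_image, Set.mem_image, Finset.mem_coe] at ha hb
    obtain ⟨a', ha', rfl⟩ := ha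
    obtain ⟨b', hb', rfl⟩ := hb
    exact h.isClique ha' hb' (fun e => hab (congrArg Subtype.val e))
  · rw [Finset.card_image_of_injective _ Subtype.val_injective]
    exact h.card_eq

lemma cliqueNum_induce_le (s : Set V) [DecidablePred (· ∈ s)] :
    (G.induce s).cliqueNum ≤ G.cliqueNum := by
  obtain ⟨t, ht⟩ := (G.induce s).exists_isNClique_cliqueNum
  have h2 := clique_induce_map G ht
  calc (G.induce s).cliqueNum = _ := h2.card_eq.symm
    _ ≤ G.cliqueNum := IsClique.card_le_cliqueNum (tc := h2.isClique)

lemma cliqueFree_induce_of_cliqueNum_lt {n : ℕ} (s : Set V) (h : G.cliqueNum < n) :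
    (G.induce s).CliqueFree n := by
  intro t ht
  have h2 := clique_induce_map G ht
  have h3 : (t.image (Subtype.val : s → V)).card ≤ G.cliqueNum :=
    IsClique.card_le_cliqueNum (tc := h2.isClique)
  rw [h2.card_eq] at h3
  omega

omit [DecidableEq V] [DecidableRel G.Adj] in
lemma cliqueNum_le_of_cliqueFree {n : ℕ} (h : G.CliqueFree (n+1)) : G.cliqueNum ≤ n := by
  by_contra hlt
  obtain ⟨t, ht⟩ := G.exists_isNClique_cliqueNum
  have : n + 1 ≤ t.card := by rw [ht.card_eq]; omega
  obtain ⟨t', ht', hc⟩ := Finset.exists_subset_card_eq this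
  exact h t' ⟨ht.isClique.subset (by exact_mod_cast ht'), hc⟩

omit [DecidableEq V] [DecidableRel G.Adj] in
lemma ne_top_of_cliqueFree {n : ℕ} (hn : n ≤ Fintype.card V) (h : G.CliqueFree n) :
    G ≠ ⊤ := by
  rintro rfl
  obtain ⟨t, _, hc⟩ := Finset.exists_subset_card_eq (show n ≤ (univ : Finset V).card by simpa)
  exact h t ⟨fun a _ b _ hab => hab, hc⟩

end helpers

section color
variable {V : Type} [Fintype V] [DecidableEq V]

lemma degree_induce_le' (G : SimpleGraph V) [DecidableRel G.Adj] (s : Set V)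
    [DecidablePred (· ∈ s)] (v : s) :
    (G.induce s).degree v ≤ G.degree ↑v := by
  show ((G.induce s).neighborFinset v).card ≤ (G.neighborFinset ↑v).card
  refine Finset.card_le_card_of_injOn (fun w => (w : V)) ?_ ?_
  · intro w hw
    simp only [Finset.mem_coe, mem_neighborFinset] at hw ⊢
    exact hw
  · intro a _ b _ h
    exact Subtype.ext h

/-- extend a k-coloring of G - x to G when deg x < k -/
lemma colorable_of_induce_compl (G : SimpleGraph V) [DecidableRel G.Adj] (x : V) (k : ℕ)
    (hd : G.degree x < k) (h : (G.induce ({x} : Set V)ᶜ).Colorable k) : G.Colorable k := by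
  obtain ⟨C⟩ := h
  have hmem : ∀ {v : V}, v ≠ x → v ∈ ({x} : Set V)ᶜ := fun hv => Set.mem_compl_singleton_iff.mpr hv
  set used : Finset (Fin k) :=
    (G.neighborFinset x).attach.image
      (fun w => C ⟨w.1, hmem (G.ne_of_adj ((SimpleGraph.mem_neighborFinset G x w.1).mp w.2)).symm⟩)
    with hused
  have hcard : used.card < k := by
    calc used.card ≤ (G.neighborFinset x).attach.card := Finset.card_image_le
    _ = G.degree x := by rw [Finset.card_attach]; rfl
    _ < k := hd
  have : usedᶜ.Nonempty := by
    rw [← Finset.card_pos, Finset.card_compl]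
    have : Fintype.card (Fin k) = k := Fintype.card_fin k
    omega
  obtain ⟨c₀, hc₀⟩ := this
  rw [Finset.mem_compl] at hc₀
  refine ⟨Coloring.mk (fun v => if h : v = x then c₀ else C ⟨v, hmem h⟩) ?_⟩
  intro v w hadj
  by_cases hv : v = x
  · have hw : w ≠ x := by rw [← hv]; exact (G.ne_of_adj hadj).symm
    rw [dif_pos hv, dif_neg hw]
    intro he
    apply hc₀
    rw [hused]
    have hadj' : G.Adj x w := by rwa [hv] at hadj
    exact Finset.mem_image.mpr
      ⟨⟨w, (SimpleGraph.mem_neighborFinset G x w).mpr hadj'⟩, Finset.mem_attach _ _, he.symm⟩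
  · by_cases hw : w = x
    · rw [dif_neg hv, dif_pos hw]
      intro he
      apply hc₀
      rw [hused]
      have hadj' : G.Adj x v := by rw [← hw]; exact hadj.symm
      exact Finset.mem_image.mpr
        ⟨⟨v, (SimpleGraph.mem_neighborFinset G x v).mpr hadj'⟩, Finset.mem_attach _ _, he⟩
    · rw [dif_neg hv, dif_neg hw]
      exact C.valid (by exact hadj)

/-- extend a coloring with one new color -/
lemma colorable_succ_of_induce_compl (G : SimpleGraph V) (x : V) (k : ℕ)
    (h : (G.induce ({x} : Set V)ᶜ).Colorable k) : G.Colorable (k+1) := by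
  obtain ⟨C⟩ := h
  have hmem : ∀ {v : V}, v ≠ x → v ∈ ({x} : Set V)ᶜ := fun hv => Set.mem_compl_singleton_iff.mpr hv
  refine ⟨Coloring.mk
    (fun v => if h : v = x then Fin.last k else Fin.castSucc (C ⟨v, hmem h⟩)) ?_⟩
  intro v w hadj
  by_cases hv : v = x
  · have hw : w ≠ x := by rw [← hv]; exact (G.ne_of_adj hadj).symm
    rw [dif_pos hv, dif_neg hw]
    exact (Fin.castSucc_lt_last _).ne'
  · by_cases hw : w = x
    · rw [dif_neg hv, dif_pos hw]
      exact (Fin.castSucc_lt_last _).ne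
    · rw [dif_neg hv, dif_neg hw]
      intro he
      exact C.valid (by exact hadj) (Fin.castSucc_injective _ he)

/-- greedy:  all degrees ≤ d  implies (d+1)-colorable -/
lemma greedy_aux (d : ℕ) : ∀ (n : ℕ) (V : Type) [Fintype V] [DecidableEq V]
    (G : SimpleGraph V) [DecidableRel G.Adj], Fintype.card V ≤ n →
    (∀ v, G.degree v ≤ d) → G.Colorable (d+1) := by
  intro n
  induction n with
  | zero =>
    intro V _ _ G _ hcard _
    have : IsEmpty V := Fintype.card_eq_zero_iff.mp (Nat.le_zero.mp hcard)
    exact SimpleGraph.Colorable.of_isEmpty (G := G) _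
  | succ n ih =>
    intro V _ _ G _ hcard hdeg
    cases isEmpty_or_nonempty V with
    | inl h => exact SimpleGraph.Colorable.of_isEmpty (G := G) _
    | inr h =>
      obtain ⟨x⟩ := h
      haveI : DecidablePred (· ∈ ({x} : Set V)ᶜ) := fun v => by
        simp only [Set.mem_compl_singleton_iff]; infer_instance
      apply colorable_of_induce_compl G x (d+1) (Nat.lt_succ_of_le (hdeg x))
      apply ih
      · have h1 : Fintype.card (({x} : Set V)ᶜ : Set V) < Fintype.card V :=
          Fintype.card_subtype_lt (x := x) (by simp)
        omega
      · intro v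
        exact le_trans (degree_induce_le' G _ v) (hdeg ↑v)

lemma greedy (G : SimpleGraph V) [iD : DecidableRel G.Adj]
    (d : ℕ) (hdeg : ∀ v, G.degree v ≤ d) : G.Colorable (d+1) :=
  greedy_aux d (Fintype.card V) V G le_rfl hdeg

/-- non-complete graph is (card - 1)-colorable -/
lemma colorable_card_pred_of_ne_top (G : SimpleGraph V) (h : G ≠ ⊤) :
    G.Colorable (Fintype.card V - 1) := by
  have : ∃ a b : V, a ≠ b ∧ ¬ G.Adj a b := by
    by_contra hc
    push_neg at hc
    apply h
    ext a b
    simp only [top_adj]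
    exact ⟨fun h' => G.ne_of_adj h', fun h' => hc a b h'⟩
  obtain ⟨a, b, hab, hnadj⟩ := this
  have hcol : G.Coloring {x : V // x ≠ b} := by
    refine Coloring.mk (fun v => if h : v = b then ⟨a, hab⟩ else ⟨v, h⟩) ?_
    intro v w hadj he
    by_cases hv : v = b
    · have hw : w ≠ b := by rw [← hv]; exact (G.ne_of_adj hadj).symm
      rw [dif_pos hv, dif_neg hw] at he
      have haw : a = w := congrArg Subtype.val he
      apply hnadj
      rw [← hv, haw]
      exact hadj.symm
    · by_cases hw : w = b
      · rw [dif_neg hv, dif_pos hw] at he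
        have hva : v = a := congrArg Subtype.val he
        apply hnadj
        rw [← hva, ← hw]
        exact hadj
      · rw [dif_neg hv, dif_neg hw] at he
        exact G.ne_of_adj hadj (congrArg Subtype.val he)
  have := hcol.colorable
  rwa [Fintype.card_subtype_compl, Fintype.card_subtype_eq] at this

end color

section grow
variable {W : Type} [Fintype W] [DecidableEq W]

/-- add the edge xy to H -/
def addE (H : SimpleGraph W) (x y : W) (hxy : x ≠ y) : SimpleGraph W where
  Adj a b := H.Adj a b ∨ (a = x ∧ b = y) ∨ (a = y ∧ b = x)
  symm := by
    constructor
    rintro a b (h | ⟨rfl, rfl⟩ | ⟨rfl, rfl⟩)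
    · exact Or.inl h.symm
    · exact Or.inr (Or.inr ⟨rfl, rfl⟩)
    · exact Or.inr (Or.inl ⟨rfl, rfl⟩)
  loopless := by
    constructor
    rintro a (h | ⟨rfl, h2⟩ | ⟨rfl, h2⟩)
    · exact H.loopless.irrefl a h
    · exact hxy h2
    · exact hxy h2.symm

instance addEDec (H : SimpleGraph W) [DecidableRel H.Adj] (x y : W) (hxy : x ≠ y) :
    DecidableRel (addE H x y hxy).Adj :=
  fun a b => inferInstanceAs (Decidable (H.Adj a b ∨ (a = x ∧ b = y) ∨ (a = y ∧ b = x)))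

lemma le_addE (H : SimpleGraph W) (x y : W) (hxy : x ≠ y) : H ≤ addE H x y hxy :=
  fun _ _ h => Or.inl h

lemma addE_degree_le (H : SimpleGraph W) [DecidableRel H.Adj] (x y : W) (hxy : x ≠ y)
    (d : ℕ) (hdeg : ∀ v, H.degree v ≤ d) (v : W) : (addE H x y hxy).degree v ≤ d + 1 := by
  show ((addE H x y hxy).neighborFinset v).card ≤ d + 1
  have hsub : (addE H x y hxy).neighborFinset v ⊆
      insert (if v = x then y else x) (H.neighborFinset v) := by
    intro w hw
    rw [mem_neighborFinset] at hw
    rcases hw with h | ⟨h1, h2⟩ | ⟨h1, h2⟩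
    · exact Finset.mem_insert_of_mem ((mem_neighborFinset _ _ _).mpr h)
    · rw [if_pos h1, h2]; exact Finset.mem_insert_self _ _
    · rw [if_neg (fun hvx : v = x => hxy (hvx.symm.trans h1)), h2]; exact Finset.mem_insert_self _ _
  calc ((addE H x y hxy).neighborFinset v).card
      ≤ (insert (if v = x then y else x) (H.neighborFinset v)).card := Finset.card_le_card hsub
    _ ≤ (H.neighborFinset v).card + 1 := Finset.card_insert_le _ _
    _ ≤ d + 1 := Nat.add_le_add_right (hdeg v) 1

/-- number of non-adjacent ordered pairs -/
def mu (H : SimpleGraph W) [DecidableRel H.Adj] : ℕ :=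
  (Finset.univ.filter (fun p : W × W => ¬ H.Adj p.1 p.2)).card

lemma mu_addE_lt (H : SimpleGraph W) [DecidableRel H.Adj] (x y : W) (hxy : x ≠ y)
    (hnadj : ¬ H.Adj x y) : mu (addE H x y hxy) < mu H := by
  apply Finset.card_lt_card
  rw [Finset.ssubset_iff_of_subset]
  · refine ⟨(x, y), ?_, ?_⟩
    · simp only [Finset.mem_filter, Finset.mem_univ, true_and]
      exact hnadj
    · simp only [Finset.mem_filter, Finset.mem_univ, true_and, not_not]
      exact Or.inr (Or.inl ⟨rfl, rfl⟩)
  · intro p hp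
    simp only [Finset.mem_filter, Finset.mem_univ, true_and] at hp ⊢
    exact fun h => hp (Or.inl h)

lemma addE_clique (H : SimpleGraph W) [DecidableRel H.Adj] {x y : W} {hxy : x ≠ y}
    (hH : H.CliqueFree 9) (hK : ¬ (addE H x y hxy).CliqueFree 9) :
    ∃ T : Finset W, H.IsNClique 7 T ∧ ∀ t ∈ T, H.Adj x t ∧ H.Adj y t := by
  rw [CliqueFree] at hK
  push_neg at hK
  obtain ⟨K, hKcl⟩ := hK
  have hmemK : ∀ {a b : W}, a ∈ K → b ∈ K → a ≠ b → (addE H x y hxy).Adj a b :=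
    fun ha hb hab => hKcl.isClique ha hb hab
  have hx : x ∈ K := by
    by_contra hx
    apply hH K
    refine ⟨?_, hKcl.card_eq⟩
    intro a ha b hb hab
    rcases hmemK ha hb hab with h | ⟨h1, h2⟩ | ⟨h1, h2⟩
    · exact h
    · exact absurd (h1 ▸ ha) hx
    · exact absurd (h2 ▸ hb) hx
  have hy : y ∈ K := by
    by_contra hy
    apply hH K
    refine ⟨?_, hKcl.card_eq⟩
    intro a ha b hb hab
    rcases hmemK ha hb hab with h | ⟨h1, h2⟩ | ⟨h1, h2⟩
    · exact h
    · exact absurd (h2 ▸ hb) hy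
    · exact absurd (h1 ▸ ha) hy
  refine ⟨(K.erase x).erase y, ⟨?_, ?_⟩, ?_⟩
  · intro a ha b hb hab
    replace ha : a ∈ (K.erase x).erase y := ha
    replace hb : b ∈ (K.erase x).erase y := hb
    have haK : a ∈ K := Finset.mem_of_mem_erase (Finset.mem_of_mem_erase ha)
    have hbK : b ∈ K := Finset.mem_of_mem_erase (Finset.mem_of_mem_erase hb)
    have hay : a ≠ y := Finset.ne_of_mem_erase ha
    have hax : a ≠ x := Finset.ne_of_mem_erase (Finset.mem_of_mem_erase ha)
    have hby : b ≠ y := Finset.ne_of_mem_erase hb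
    have hbx : b ≠ x := Finset.ne_of_mem_erase (Finset.mem_of_mem_erase hb)
    rcases hmemK haK hbK hab with h | ⟨h1, h2⟩ | ⟨h1, h2⟩
    · exact h
    · exact absurd h1 hax
    · exact absurd h1 hay
  · rw [Finset.card_erase_of_mem, Finset.card_erase_of_mem hx, hKcl.card_eq]
    exact Finset.mem_erase.mpr ⟨hxy.symm, hy⟩
  · intro t ht
    have htK : t ∈ K := Finset.mem_of_mem_erase (Finset.mem_of_mem_erase ht)
    have hty : t ≠ y := Finset.ne_of_mem_erase ht
    have htx : t ≠ x := Finset.ne_of_mem_erase (Finset.mem_of_mem_erase ht)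
    constructor
    · rcases hmemK hx htK htx.symm with h | ⟨h1, h2⟩ | ⟨h1, h2⟩
      · exact h
      · exact absurd h2 hty
      · exact absurd h1 hxy
    · rcases hmemK hy htK hty.symm with h | ⟨h1, h2⟩ | ⟨h1, h2⟩
      · exact h
      · exact absurd h1 hxy.symm
      · exact absurd h2 htx

end grow

section key
variable {W : Type} [Fintype W] [DecidableEq W]

lemma key_lemma (H : SimpleGraph W) [DecidableRel H.Adj] (h10 : 10 ≤ Fintype.card W)
    (hdeg : ∀ v, H.degree v ≤ 8)
    (hpair : ∀ x y : W, x ≠ y → ¬H.Adj x y →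
      ∃ T : Finset W, H.IsNClique 7 T ∧ ∀ t ∈ T, H.Adj x t ∧ H.Adj y t) : False := by
  have hW : Nonempty W := Fintype.card_pos_iff.mp (by omega)
  -- a nonadjacent pair exists from any vertex
  have hfind : ∀ x : W, ∃ y, y ≠ x ∧ ¬H.Adj x y := by
    intro x
    have h1 : (insert x (H.neighborFinset x)).card ≤ 9 := by
      calc (insert x (H.neighborFinset x)).card ≤ (H.neighborFinset x).card + 1 :=
            Finset.card_insert_le _ _
        _ ≤ 9 := Nat.add_le_add_right (hdeg x) 1
    have h2 : ((insert x (H.neighborFinset x))ᶜ).Nonempty := by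
      rw [← Finset.card_pos, Finset.card_compl]
      omega
    obtain ⟨y, hy⟩ := h2
    rw [Finset.mem_compl, Finset.mem_insert, not_or] at hy
    exact ⟨y, hy.1, fun h => hy.2 ((mem_neighborFinset _ _ _).mpr h)⟩
  obtain ⟨x⟩ := hW
  obtain ⟨y, hyx, hnadj⟩ := hfind x
  obtain ⟨T, hT, hTadj⟩ := hpair x y hyx.symm hnadj
  have hxT : x ∉ T := fun h => H.loopless.irrefl x (hTadj x h).1
  have hyT : y ∉ T := fun h => H.loopless.irrefl y (hTadj y h).2
  have hTne : T.Nonempty := by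
    rw [← Finset.card_pos, hT.card_eq]; omega
  obtain ⟨t, ht⟩ := hTne
  have hTclique : ∀ {a b : W}, a ∈ T → b ∈ T → a ≠ b → H.Adj a b :=
    fun ha hb hab => hT.isClique ha hb hab
  -- B = N(t)
  set B : Finset W := insert x (insert y (T.erase t)) with hB
  have hBsub : B ⊆ H.neighborFinset t := by
    intro w hw
    rw [mem_neighborFinset]
    rw [hB, Finset.mem_insert, Finset.mem_insert] at hw
    rcases hw with rfl | rfl | hw
    · exact (hTadj t ht).1.symm
    · exact (hTadj t ht).2.symm
    · exact hTclique ht (Finset.mem_of_mem_erase hw) (Finset.ne_of_mem_erase hw).symm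
  have hyney : y ∉ insert x (insert y (T.erase t)) → False := fun h => h (by simp)
  have hBcard : B.card = 8 := by
    rw [hB]
    rw [Finset.card_insert_of_notMem, Finset.card_insert_of_notMem,
      Finset.card_erase_of_mem ht, hT.card_eq]
    · intro h
      exact hyT (Finset.mem_of_mem_erase h)
    · rw [Finset.mem_insert, not_or]
      exact ⟨hyx.symm, fun h => hxT (Finset.mem_of_mem_erase h)⟩
  have hBeq : B = H.neighborFinset t := by
    apply Finset.eq_of_subset_of_card_le hBsub
    rw [hBcard]
    exact hdeg t
  -- pick z outside {x, y} ∪ T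
  have hC : (insert x (insert y T)).card ≤ 9 := by
    calc (insert x (insert y T)).card ≤ (insert y T).card + 1 := Finset.card_insert_le _ _
      _ ≤ T.card + 1 + 1 := Nat.add_le_add_right (Finset.card_insert_le _ _) 1
      _ ≤ 9 := by rw [hT.card_eq]
  have hz : ((insert x (insert y T))ᶜ).Nonempty := by
    rw [← Finset.card_pos, Finset.card_compl]
    omega
  obtain ⟨z, hz⟩ := hz
  rw [Finset.mem_compl, Finset.mem_insert, Finset.mem_insert, not_or, not_or] at hz
  obtain ⟨hzx, hzy, hzT⟩ := hz
  have hzt : z ≠ t := fun h => hzT (h ▸ ht)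
  have hznadj : ¬H.Adj t z := by
    intro h
    have : z ∈ B := hBeq ▸ (mem_neighborFinset _ _ _).mpr h
    rw [hB, Finset.mem_insert, Finset.mem_insert] at this
    rcases this with rfl | rfl | hw
    · exact hzx rfl
    · exact hzy rfl
    · exact hzT (Finset.mem_of_mem_erase hw)
  obtain ⟨T', hT', hT'adj⟩ := hpair t z hzt.symm hznadj
  -- T' ⊆ B, and T' meets T.erase t
  have hT'sub : T' ⊆ B := by
    intro s hs
    rw [hBeq, mem_neighborFinset]
    exact (hT'adj s hs).1
  have hmeet : ∃ s, s ∈ T' ∧ s ∈ T.erase t := by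
    by_contra hc
    push_neg at hc
    have hsub2 : T' ⊆ insert x {y} := by
      intro s hs
      have := hT'sub hs
      rw [hB, Finset.mem_insert, Finset.mem_insert] at this
      rcases this with rfl | rfl | hw
      · exact Finset.mem_insert_self _ _
      · exact Finset.mem_insert_of_mem (Finset.mem_singleton_self _)
      · exact absurd hw (hc s hs)
    have := Finset.card_le_card hsub2
    rw [hT'.card_eq] at this
    have h2 : (insert x ({y} : Finset W)).card ≤ 2 := by
      calc (insert x ({y} : Finset W)).card ≤ ({y} : Finset W).card + 1 :=
          Finset.card_insert_le _ _
        _ ≤ 2 := by rw [Finset.card_singleton]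
    omega
  obtain ⟨s, hsT', hsTe⟩ := hmeet
  have hsT : s ∈ T := Finset.mem_of_mem_erase hsTe
  -- now s has 9 neighbors : x, y, z and T.erase s
  have hfinal : insert x (insert y (insert z (T.erase s))) ⊆ H.neighborFinset s := by
    intro w hw
    rw [mem_neighborFinset]
    rw [Finset.mem_insert, Finset.mem_insert, Finset.mem_insert] at hw
    rcases hw with rfl | rfl | rfl | hw
    · exact (hTadj s hsT).1.symm
    · exact (hTadj s hsT).2.symm
    · exact (hT'adj s hsT').2.symm
    · exact hTclique hsT (Finset.mem_of_mem_erase hw) (Finset.ne_of_mem_erase hw).symm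
  have hfcard : (insert x (insert y (insert z (T.erase s)))).card = 9 := by
    rw [Finset.card_insert_of_notMem, Finset.card_insert_of_notMem,
      Finset.card_insert_of_notMem, Finset.card_erase_of_mem hsT, hT.card_eq]
    · intro h
      exact hzT (Finset.mem_of_mem_erase h)
    · rw [Finset.mem_insert, not_or]
      exact ⟨fun h => hzy h.symm, fun h => hyT (Finset.mem_of_mem_erase h)⟩
    · rw [Finset.mem_insert, Finset.mem_insert, not_or, not_or]
      exact ⟨hyx.symm, fun h => hzx h.symm, fun h => hxT (Finset.mem_of_mem_erase h)⟩
  have := Finset.card_le_card hfinal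
  rw [hfcard] at this
  have hds : (H.neighborFinset s).card ≤ 8 := hdeg s
  omega

end key

section growsec
variable {W : Type} [Fintype W] [DecidableEq W]

lemma grow_colorable
    (hmin8 : ∀ (H : SimpleGraph W) (iD : DecidableRel H.Adj), H ≠ ⊤ → 9 ≤ H.maxDegree →
      H.chromaticNumber ≤ (↑(max (H.maxDegree - 1) H.cliqueNum) : ℕ∞))
    (h10 : 10 ≤ Fintype.card W) :
    ∀ (k : ℕ) (H : SimpleGraph W) [iD : DecidableRel H.Adj], mu H ≤ k →
      H.CliqueFree 9 → (∀ v, H.degree v ≤ 9) → H.Colorable 8 := by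
  intro k
  induction k using Nat.strong_induction_on with
  | _ k ih =>
    intro H iD hmu hcf hdeg
    by_cases hΔ : ∃ v, H.degree v = 9
    · obtain ⟨v, hv⟩ := hΔ
      have hmax9 : H.maxDegree = 9 :=
        le_antisymm (H.maxDegree_le_of_forall_degree_le 9 hdeg) (hv ▸ H.degree_le_maxDegree v)
      have hne : H ≠ ⊤ := ne_top_of_cliqueFree H (by omega) hcf
      have hcn : H.cliqueNum ≤ 8 := cliqueNum_le_of_cliqueFree H hcf
      have hb : max (H.maxDegree - 1) H.cliqueNum ≤ 8 := by
        rw [hmax9]; exact max_le (by norm_num) hcn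
      have h1 := hmin8 H iD hne (by rw [hmax9])
      have h2 : H.chromaticNumber ≤ ((8 : ℕ) : ℕ∞) :=
        le_trans h1 (by exact_mod_cast hb)
      exact chromaticNumber_le_iff_colorable.mp h2
    · push_neg at hΔ
      have hdeg8 : ∀ v, H.degree v ≤ 8 := fun v => by
        have h1 := hdeg v; have h2 := hΔ v; omega
      by_cases hex : ∃ (x y : W) (hxy : x ≠ y), ¬H.Adj x y ∧ (addE H x y hxy).CliqueFree 9
      · obtain ⟨x, y, hxy, hnadj, hcf'⟩ := hex
        have hlt : mu (addE H x y hxy) < k := lt_of_lt_of_le (mu_addE_lt H x y hxy hnadj) hmu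
        have hcol := ih _ hlt (addE H x y hxy) le_rfl hcf'
          (addE_degree_le H x y hxy 8 hdeg8)
        exact hcol.mono_left (le_addE H x y hxy)
      · exfalso
        apply key_lemma H h10 hdeg8
        intro x y hxy hnadj
        have hncf : ¬ (addE H x y hxy).CliqueFree 9 := fun h => hex ⟨x, y, hxy, hnadj, h⟩
        exact addE_clique H hcf hncf

end growsec

theorem borodin_kostochka_lemma_part2
    {V : Type} [Fintype V] [Nonempty V]
    (G : SimpleGraph V) [DecidableRel G.Adj]
    (hnc : G ≠ ⊤)
    (hΔ : 9 ≤ G.maxDegree)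
    (hχ : (↑(max (G.maxDegree - 1) G.cliqueNum) : ℕ∞) < G.chromaticNumber)
    (hmin : ∀ (W : Type) [Fintype W] (H : SimpleGraph W) [DecidableRel H.Adj],
      Fintype.card W < Fintype.card V → H ≠ ⊤ → 9 ≤ H.maxDegree →
      H.chromaticNumber ≤ (↑(max (H.maxDegree - 1) H.cliqueNum) : ℕ∞)) :
    ∀ u : V, (G.induce {u}ᶜ).chromaticNumber = G.chromaticNumber - 1 := by
  haveI : DecidableEq V := Classical.decEq V
  intro u
  haveI : DecidablePred (· ∈ ({u} : Set V)ᶜ) := fun v => by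
    simp only [Set.mem_compl_singleton_iff]; infer_instance
  set G' : SimpleGraph (({u} : Set V)ᶜ : Set V) := G.induce ({u} : Set V)ᶜ with hG'
  set n : ℕ := Fintype.card V with hn
  have hcardW : Fintype.card (({u} : Set V)ᶜ : Set V) = n - 1 := by
    have e : ((({u} : Set V)ᶜ : Set V)) ≃ {v : V // v ≠ u} := Equiv.subtypeEquivRight (by simp)
    rw [Fintype.card_congr e, Fintype.card_subtype_compl, Fintype.card_subtype_eq]
  have hn10 : 10 ≤ n := by
    have := G.maxDegree_lt_card_verts
    omega
  have hWlt : Fintype.card (({u} : Set V)ᶜ : Set V) < n := by omega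
  set k : ℕ := max (G.maxDegree - 1) G.cliqueNum with hkdef
  have hk8 : 8 ≤ k := le_trans (by omega) (le_max_left (G.maxDegree - 1) G.cliqueNum)
  -- χ(G) is finite
  have hfin : G.chromaticNumber ≠ ⊤ := by
    have h1 := (G.colorable_of_fintype).chromaticNumber_le
    exact (lt_of_le_of_lt h1 (ENat.coe_lt_top _)).ne
  set c : ℕ := G.chromaticNumber.toNat with hcdef
  have hc : (c : ℕ∞) = G.chromaticNumber := ENat.coe_toNat hfin
  have hkc : k < c := by
    have := hχ
    rw [← hc] at this
    exact_mod_cast this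
  -- upper bound : G' is k-colorable
  have hcolk : G'.Colorable k := by
    by_cases hD : 9 ≤ G'.maxDegree
    · -- apply minimality directly to G'
      have hne' : G' ≠ ⊤ := by
        intro htop
        -- then V - u is a clique of size n-1 in G
        have huniv : G'.IsNClique (Fintype.card (({u} : Set V)ᶜ : Set V)) Finset.univ := by
          constructor
          · intro a _ b _ hab
            rw [htop]
            exact top_adj _ _ |>.mpr (fun h => hab (by exact_mod_cast h))
          · exact Finset.card_univ
        have h2 := clique_induce_map G huniv
        have h3 : Fintype.card (({u} : Set V)ᶜ : Set V) ≤ G.cliqueNum := by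
          rw [← h2.card_eq] at *
          exact h2.card_eq ▸ IsClique.card_le_cliqueNum (tc := h2.isClique)
        have h4 : G.Colorable (n - 1) := colorable_card_pred_of_ne_top G hnc
        have h5 : G.chromaticNumber ≤ ((n - 1 : ℕ) : ℕ∞) := h4.chromaticNumber_le
        have h6 : (c : ℕ) ≤ n - 1 := by
          rw [← hc] at h5
          exact_mod_cast h5
        have h7 : G.cliqueNum ≤ k := le_max_right _ _
        omega
      have hmm := hmin _ G' hWlt hne' hD
      have hmono : max (G'.maxDegree - 1) G'.cliqueNum ≤ k := by
        apply max_le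
        · have h1 : G'.maxDegree ≤ G.maxDegree := maxDegree_induce_le G ({u} : Set V)ᶜ
          have h2 : G.maxDegree - 1 ≤ k := le_max_left _ _
          omega
        · exact le_trans (cliqueNum_induce_le G _) (le_max_right _ _)
      apply chromaticNumber_le_iff_colorable.mp
      exact le_trans hmm (by exact_mod_cast hmono)
    · push_neg at hD
      have hdeg8 : ∀ v, G'.degree v ≤ 8 := fun v =>
        le_trans (G'.degree_le_maxDegree v) (by omega)
      by_cases hk9 : 9 ≤ k
      · exact (greedy G' 8 hdeg8).mono hk9
      · have hkk : k = 8 := by omega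
        have hω : G.cliqueNum ≤ 8 := le_trans (le_max_right (G.maxDegree - 1) _) (le_of_eq hkk)
        have hcf' : G'.CliqueFree 9 := cliqueFree_induce_of_cliqueNum_lt G _ (by omega)
        by_cases hm10 : 10 ≤ Fintype.card (({u} : Set V)ᶜ : Set V)
        · have hmin8 : ∀ (H : SimpleGraph (({u} : Set V)ᶜ : Set V)) (iD : DecidableRel H.Adj),
              H ≠ ⊤ → 9 ≤ H.maxDegree →
              H.chromaticNumber ≤ (↑(max (H.maxDegree - 1) H.cliqueNum) : ℕ∞) := by
            intro H iD h1 h2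
            exact hmin _ H hWlt h1 h2
          have hcol8 := grow_colorable hmin8 hm10 (mu G') G' le_rfl hcf'
            (fun v => le_trans (hdeg8 v) (by norm_num))
          exact hcol8.mono (by omega)
        · have hm9 : Fintype.card (({u} : Set V)ᶜ : Set V) = 9 := by omega
          have hne' : G' ≠ ⊤ := ne_top_of_cliqueFree G' (by omega) hcf'
          have hcol := colorable_card_pred_of_ne_top G' hne'
          rw [hm9] at hcol
          exact hcol.mono (by omega)
  -- χ(G') finite value
  have hfin' : G'.chromaticNumber ≠ ⊤ := by
    have h1 := hcolk.chromaticNumber_le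
    exact (lt_of_le_of_lt h1 (ENat.coe_lt_top _)).ne
  set c' : ℕ := G'.chromaticNumber.toNat with hc'def
  have hc' : (c' : ℕ∞) = G'.chromaticNumber := ENat.coe_toNat hfin'
  have hupper : c' ≤ k := by
    have h1 := hcolk.chromaticNumber_le
    rw [← hc'] at h1
    exact_mod_cast h1
  -- lower bound : χ(G) ≤ χ(G') + 1
  have hlow : c ≤ c' + 1 := by
    have h1 : G'.Colorable c' := by
      have := G'.colorable_chromaticNumber_of_fintype
      exact this
    have h2 : G.Colorable (c' + 1) := colorable_succ_of_induce_compl G u c' h1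
    have h3 := h2.chromaticNumber_le
    rw [← hc] at h3
    exact_mod_cast h3
  have hceq : c' = c - 1 := by omega
  rw [← hc, ← hc', hceq]
  rw [show ((1 : ℕ∞)) = ((1 : ℕ) : ℕ∞) from rfl, ← ENat.coe_sub]
end

section
/- Let G be a finite simple graph with maximum degree Δ(G) ≥ 9 that is (P3 ∪ K1)-free, i.e., G contains no induced subgraph isomorphic to the disjoint union of a path on 3 vertices and a single isolated vertex. Then χ(G) ≤ max{Δ(G) − 1, ω(G)}. -/
open SimpleGraph Finset

set_option linter.unusedSectionVars false
set_option linter.unusedTactic false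
set_option linter.unreachableTactic false

/-- `P3 ∪ K1`: the path `0 – 1 – 2` on three vertices together with the
isolated vertex `3`. -/
def P3UnionK1 : SimpleGraph (Fin 4) :=
  SimpleGraph.fromRel (fun a b => (a = 0 ∧ b = 1) ∨ (a = 1 ∧ b = 2))

section Aux
variable {V : Type*} [Fintype V] [DecidableEq V]

lemma colorable_of_proper_nat (G : SimpleGraph V) (k : ℕ) (c : V → ℕ)
    (hlt : ∀ v, c v < k) (hc : ∀ u v, G.Adj u v → c u ≠ c v) : G.Colorable k :=
  ⟨SimpleGraph.Coloring.mk (fun v => ⟨c v, hlt v⟩)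
    (fun {u v} hadj h => hc u v hadj (by simpa [Fin.ext_iff] using h))⟩

lemma colorable_of_rep (G : SimpleGraph V) (k : ℕ) (c : V → V)
    (hc : ∀ u v, G.Adj u v → c u ≠ c v) (hk : (Finset.univ.image c).card ≤ k) :
    G.Colorable k := by
  classical
  set s := Finset.univ.image c with hs
  have hcard : Fintype.card ↥s = s.card := Fintype.card_coe s
  let e : ↥s ≃ Fin s.card := Fintype.equivFinOfCardEq hcard
  have hmem : ∀ v, c v ∈ s := fun v => Finset.mem_image_of_mem c (Finset.mem_univ v)
  refine ⟨SimpleGraph.Coloring.mk (fun v => Fin.castLE hk (e ⟨c v, hmem v⟩)) ?_⟩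
  intro u v hadj h
  apply hc u v hadj
  have h2 : e ⟨c u, hmem u⟩ = e ⟨c v, hmem v⟩ := by
    apply Fin.castLE_injective hk h
  have := e.injective h2
  simpa using congrArg Subtype.val this

lemma greedy_aux_s6 (G : SimpleGraph V) [DecidableRel G.Adj]
    (T : Finset V) (b : V → ℕ)
    (hb : ∀ v ∈ T, (T.filter (fun w => G.Adj v w)).card < b v) :
    ∃ c : V → ℕ, (∀ v ∈ T, c v < b v) ∧ ∀ u ∈ T, ∀ v ∈ T, G.Adj u v → c u ≠ c v := by
  classical
  induction T using Finset.strongInduction with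
  | _ T ih =>
    rcases T.eq_empty_or_nonempty with rfl | ⟨v, hv⟩
    · exact ⟨fun _ => 0, by simp, by simp⟩
    · have hsub : T.erase v ⊂ T := Finset.erase_ssubset hv
      obtain ⟨c, hc1, hc2⟩ := ih (T.erase v) hsub (fun w hw =>
        lt_of_le_of_lt
          (Finset.card_le_card (Finset.filter_subset_filter _ (Finset.erase_subset _ _)))
          (hb w (Finset.mem_of_mem_erase hw)))
      set used : Finset ℕ := ((T.erase v).filter (fun w => G.Adj v w)).image c with husedd
      have hused : used.card < b v := by
        refine lt_of_le_of_lt (le_trans Finset.card_image_le ?_) (hb v hv)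
        exact Finset.card_le_card (Finset.filter_subset_filter _ (Finset.erase_subset _ _))
      have hne : (Finset.range (b v) \ used).Nonempty := by
        rw [← Finset.card_pos]
        have h1 := Finset.card_le_card_sdiff_add_card (s := Finset.range (b v)) (t := used)
        rw [Finset.card_range] at h1
        omega
      obtain ⟨k, hk⟩ := hne
      rw [Finset.mem_sdiff, Finset.mem_range] at hk
      refine ⟨Function.update c v k, ?_, ?_⟩
      · intro w hw
        rcases eq_or_ne w v with rfl | hwv
        · simpa using hk.1
        · rw [Function.update_of_ne hwv]
          exact hc1 w (Finset.mem_erase.mpr ⟨hwv, hw⟩)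
      · intro u hu w hw hadj
        rcases eq_or_ne u v with rfl | huv
        · have hwv : w ≠ u := (G.ne_of_adj hadj).symm
          rw [Function.update_self, Function.update_of_ne hwv]
          intro h
          exact hk.2 (h ▸ Finset.mem_image_of_mem c
            (Finset.mem_filter.mpr ⟨Finset.mem_erase.mpr ⟨hwv, hw⟩, hadj⟩))
        · rcases eq_or_ne w v with rfl | hwv
          · rw [Function.update_self, Function.update_of_ne huv]
            intro h
            exact hk.2 (h ▸ Finset.mem_image_of_mem c
              (Finset.mem_filter.mpr ⟨Finset.mem_erase.mpr ⟨huv, hu⟩, hadj.symm⟩))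
          · rw [Function.update_of_ne huv, Function.update_of_ne hwv]
            exact hc2 u (Finset.mem_erase.mpr ⟨huv, hu⟩) w (Finset.mem_erase.mpr ⟨hwv, hw⟩) hadj

end Aux

section Matching
variable {V : Type*} [DecidableEq V] {H : SimpleGraph V}

def IsMatch (H : SimpleGraph V) (M : Finset (V × V)) : Prop :=
  (∀ p ∈ M, H.Adj p.1 p.2) ∧
  ∀ p ∈ M, ∀ q ∈ M, p ≠ q → p.1 ≠ q.1 ∧ p.1 ≠ q.2 ∧ p.2 ≠ q.1 ∧ p.2 ≠ q.2

def ExposedIn (M : Finset (V × V)) (x : V) : Prop := ∀ p ∈ M, x ≠ p.1 ∧ x ≠ p.2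

lemma IsMatch.subset {M M' : Finset (V × V)} (h : M' ⊆ M) (hM : IsMatch H M) :
    IsMatch H M' :=
  ⟨fun p hp => hM.1 p (h hp), fun p hp q hq => hM.2 p (h hp) q (h hq)⟩

lemma ExposedIn.mono {M M' : Finset (V × V)} {x : V} (h : M' ⊆ M) (hx : ExposedIn M x) :
    ExposedIn M' x := fun p hp => hx p (h hp)

lemma ExposedIn.insert {M : Finset (V × V)} {x a b : V} (h1 : x ≠ a) (h2 : x ≠ b)
    (hx : ExposedIn M x) : ExposedIn (insert (a, b) M) x := by
  intro p hp
  rcases Finset.mem_insert.mp hp with rfl | hp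
  · exact ⟨h1, h2⟩
  · exact hx p hp

lemma IsMatch.fst_exposed {M : Finset (V × V)} (hM : IsMatch H M) {p : V × V}
    (hp : p ∈ M) {M' : Finset (V × V)} (h : M' ⊆ M.erase p) : ExposedIn M' p.1 := by
  intro q hq
  have hq' := h hq
  have h2 := hM.2 p hp q (Finset.mem_of_mem_erase hq') (Finset.ne_of_mem_erase hq').symm
  exact ⟨h2.1, h2.2.1⟩

lemma IsMatch.snd_exposed {M : Finset (V × V)} (hM : IsMatch H M) {p : V × V}
    (hp : p ∈ M) {M' : Finset (V × V)} (h : M' ⊆ M.erase p) : ExposedIn M' p.2 := by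
  intro q hq
  have hq' := h hq
  have h2 := hM.2 p hp q (Finset.mem_of_mem_erase hq') (Finset.ne_of_mem_erase hq').symm
  exact ⟨h2.2.2.1, h2.2.2.2⟩

lemma IsMatch.insert' {M : Finset (V × V)} {a b : V} (hM : IsMatch H M) (hab : H.Adj a b)
    (ha : ExposedIn M a) (hb : ExposedIn M b) :
    IsMatch H (insert (a, b) M) ∧ (insert (a, b) M).card = M.card + 1 := by
  have hnm : (a, b) ∉ M := fun h => (ha _ h).1 rfl
  refine ⟨⟨?_, ?_⟩, Finset.card_insert_of_notMem hnm⟩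
  · intro p hp
    rcases Finset.mem_insert.mp hp with rfl | hp
    · exact hab
    · exact hM.1 p hp
  · intro p hp q hq hpq
    rcases Finset.mem_insert.mp hp with rfl | hp <;>
      rcases Finset.mem_insert.mp hq with rfl | hq
    · exact absurd rfl hpq
    · exact ⟨(ha q hq).1, (ha q hq).2, (hb q hq).1, (hb q hq).2⟩
    · exact ⟨(ha p hp).1.symm, (hb p hp).1.symm, (ha p hp).2.symm, (hb p hp).2.symm⟩
    · exact hM.2 p hp q hq hpq

lemma aug_edge {M : Finset (V × V)} (hM : IsMatch H M)
    (hmax : ∀ M', IsMatch H M' → M'.card ≤ M.card)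
    {u u' : V} (hu : ExposedIn M u) (hu' : ExposedIn M u') (huu : H.Adj u u') : False := by
  obtain ⟨hm, hc⟩ := hM.insert' huu hu hu'
  have := hmax _ hm
  omega

lemma aug3 {M : Finset (V × V)} (hM : IsMatch H M)
    (hmax : ∀ M', IsMatch H M' → M'.card ≤ M.card)
    {p : V × V} (hp : p ∈ M) {u u' : V} (hu : ExposedIn M u) (hu' : ExposedIn M u')
    (huu : u ≠ u') (h1 : H.Adj u p.1) (h2 : H.Adj p.2 u') : False := by
  have hsub : M.erase p ⊆ M.erase p := Finset.Subset.refl _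
  have e1 := (hM.subset (Finset.erase_subset _ _)).insert' h2 (hM.snd_exposed hp hsub)
    (hu'.mono (Finset.erase_subset _ _))
  have e2 := e1.1.insert' h1
    ((hu.mono (Finset.erase_subset _ _)).insert (hu p hp).2 huu)
    ((hM.fst_exposed hp hsub).insert (hM.1 p hp).ne ((hu' p hp).1.symm))
  have := hmax _ e2.1
  have hcB : (M.erase p).card = M.card - 1 := Finset.card_erase_of_mem hp
  have hp1 : 1 ≤ M.card := Finset.card_pos.mpr ⟨p, hp⟩
  omega

lemma aug5 {M : Finset (V × V)} (hM : IsMatch H M)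
    (hmax : ∀ M', IsMatch H M' → M'.card ≤ M.card)
    {p q : V × V} (hp : p ∈ M) (hq : q ∈ M) (hpq : p ≠ q)
    {u u' : V} (hu : ExposedIn M u) (hu' : ExposedIn M u') (huu : u ≠ u')
    (h1 : H.Adj u p.1) (hmid : H.Adj p.2 q.2) (h2 : H.Adj u' q.1) : False := by
  have hd := hM.2 p hp q hq hpq
  set B0 := (M.erase p).erase q with hB0
  have hq0 : q ∈ M.erase p := Finset.mem_erase.mpr ⟨Ne.symm hpq, hq⟩
  have hsubp : B0 ⊆ M.erase p := Finset.erase_subset _ _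
  have hsubq : B0 ⊆ M.erase q := by
    intro x hx
    rw [Finset.mem_erase] at hx ⊢
    exact ⟨hx.1, Finset.mem_of_mem_erase hx.2⟩
  have hsubM : B0 ⊆ M := hsubp.trans (Finset.erase_subset _ _)
  have hMB0 : IsMatch H B0 := hM.subset hsubM
  have hcB0 : B0.card = M.card - 2 := by
    rw [hB0, Finset.card_erase_of_mem hq0, Finset.card_erase_of_mem hp]; omega
  -- step 1 : insert (q.1, u')
  have e1 := hMB0.insert' (h2.symm) (hM.fst_exposed hq hsubq) (hu'.mono hsubM)
  -- step 2 : insert (p.2, q.2)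
  have e2 := e1.1.insert'  hmid
    ((hM.snd_exposed hp hsubp).insert hd.2.2.1 ((hu' p hp).2.symm))
    ((hM.snd_exposed hq hsubq).insert (hM.1 q hq).ne.symm ((hu' q hq).2.symm))
  -- step 3 : insert (u, p.1)
  have e3 := e2.1.insert' h1
    (((hu.mono hsubM).insert (hu q hq).1 huu).insert (hu p hp).2 (hu q hq).2)
    (((hM.fst_exposed hp hsubp).insert hd.1 ((hu' p hp).1.symm)).insert
      (hM.1 p hp).ne hd.2.1)
  have := hmax _ e3.1
  have hc2 : 2 ≤ M.card := Finset.one_lt_card.mpr ⟨p, hp, q, hq, hpq⟩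
  omega

/-- Augmenting path of length 7 :
`u - q.1 - q.2 - p.2 - p.1 - r.2 - r.1 - u'` (with `p, q, r ∈ M`). -/
lemma aug7 {M : Finset (V × V)} (hM : IsMatch H M)
    (hmax : ∀ M', IsMatch H M' → M'.card ≤ M.card)
    {p q r : V × V} (hp : p ∈ M) (hq : q ∈ M) (hr : r ∈ M)
    (hpq : p ≠ q) (hpr : p ≠ r) (hqr : q ≠ r)
    {u u' : V} (hu : ExposedIn M u) (hu' : ExposedIn M u') (huu : u ≠ u')
    (h1 : H.Adj u q.1) (m1 : H.Adj q.2 p.2) (m2 : H.Adj p.1 r.2) (h2 : H.Adj r.1 u') :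
    False := by
  have dpq := hM.2 p hp q hq hpq
  have dpr := hM.2 p hp r hr hpr
  have dqr := hM.2 q hq r hr hqr
  set B0 := ((M.erase p).erase q).erase r with hB0
  have hq0 : q ∈ M.erase p := Finset.mem_erase.mpr ⟨Ne.symm hpq, hq⟩
  have hr0 : r ∈ (M.erase p).erase q :=
    Finset.mem_erase.mpr ⟨Ne.symm hqr, Finset.mem_erase.mpr ⟨Ne.symm hpr, hr⟩⟩
  have hsubp : B0 ⊆ M.erase p := by
    intro x hx
    simp only [hB0, Finset.mem_erase] at hx ⊢
    tauto
  have hsubq : B0 ⊆ M.erase q := by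
    intro x hx
    simp only [hB0, Finset.mem_erase] at hx ⊢
    tauto
  have hsubr : B0 ⊆ M.erase r := by
    intro x hx
    simp only [hB0, Finset.mem_erase] at hx ⊢
    tauto
  have hsubM : B0 ⊆ M := hsubp.trans (Finset.erase_subset _ _)
  have hMB0 : IsMatch H B0 := hM.subset hsubM
  have hcB0 : B0.card = M.card - 3 := by
    rw [hB0, Finset.card_erase_of_mem hr0, Finset.card_erase_of_mem hq0,
      Finset.card_erase_of_mem hp]; omega
  -- step 1 : insert (r.1, u')
  have e1 := hMB0.insert' h2 (hM.fst_exposed hr hsubr) (hu'.mono hsubM)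
  -- step 2 : insert (p.1, r.2)
  have e2 := e1.1.insert' m2
    ((hM.fst_exposed hp hsubp).insert dpr.1 ((hu' p hp).1.symm))
    ((hM.snd_exposed hr hsubr).insert (hM.1 r hr).ne.symm ((hu' r hr).2.symm))
  -- step 3 : insert (q.2, p.2)
  have e3 := e2.1.insert' m1
    (((hM.snd_exposed hq hsubq).insert dqr.2.2.1 ((hu' q hq).2.symm)).insert
      dpq.2.1.symm dqr.2.2.2)
    (((hM.snd_exposed hp hsubp).insert dpr.2.2.1 ((hu' p hp).2.symm)).insert
      (hM.1 p hp).ne.symm dpr.2.2.2)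
  -- step 4 : insert (u, q.1)
  have e4 := e3.1.insert' h1
    ((((hu.mono hsubM).insert (hu r hr).1 huu).insert (hu p hp).1 (hu r hr).2).insert
      (hu q hq).2 (hu p hp).2)
    ((((hM.fst_exposed hq hsubq).insert dqr.1 ((hu' q hq).1.symm)).insert
      dpq.1.symm dqr.2.1).insert (hM.1 q hq).ne dpq.2.2.1.symm)
  have := hmax _ e4.1
  have hc3 : 3 ≤ M.card := by
    have : ({p, q, r} : Finset (V × V)) ⊆ M := by
      intro x hx
      simp only [Finset.mem_insert, Finset.mem_singleton] at hx
      rcases hx with rfl | rfl | rfl <;> assumption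
    calc 3 = ({p, q, r} : Finset (V × V)).card := by
              rw [Finset.card_insert_of_notMem (by simp [hpq, hpr]),
                Finset.card_insert_of_notMem (by simp [hqr]), Finset.card_singleton]
         _ ≤ M.card := Finset.card_le_card this
  omega

end Matching

section Matching2
variable {V : Type*} [DecidableEq V] {H : SimpleGraph V}

lemma IsMatch.ends_card [Fintype V] {M : Finset (V × V)} (hM : IsMatch H M) :
    (M.biUnion fun p => ({p.1, p.2} : Finset V)).card = 2 * M.card := by
  rw [Finset.card_biUnion]
  · rw [Finset.sum_congr rfl (fun p hp => Finset.card_pair (hM.1 p hp).ne),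
      Finset.sum_const, smul_eq_mul, mul_comm]
  · intro p hp q hq hpq
    have h := hM.2 p hp q hq hpq
    simp only [Finset.disjoint_insert_left, Finset.disjoint_singleton_left,
      Finset.mem_insert, Finset.mem_singleton]
    push_neg
    exact ⟨⟨h.1, h.2.1⟩, h.2.2.1, h.2.2.2⟩

lemma IsMatch.exposed_card [Fintype V] {M : Finset (V × V)} (hM : IsMatch H M)
    {U : Finset V} (hU : ∀ v, v ∈ U ↔ ExposedIn M v) :
    U.card = Fintype.card V - 2 * M.card := by
  have hUeq : U = univ.filter fun v => ∀ p ∈ M, v ≠ p.1 ∧ v ≠ p.2 := by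
    ext v
    simp only [Finset.mem_filter, Finset.mem_univ, true_and]
    exact hU v
  rw [hUeq, ← hM.ends_card]
  rw [← Finset.card_univ, ← Finset.card_sdiff_of_subset (Finset.subset_univ _)]
  congr 1
  ext v
  simp only [Finset.mem_filter, Finset.mem_univ, true_and, Finset.mem_sdiff,
    Finset.mem_biUnion, Finset.mem_insert, Finset.mem_singleton]
  push_neg
  constructor
  · intro h p hp
    exact ⟨(h p hp).1, (h p hp).2⟩
  · intro h p hp
    exact ⟨(h p hp).1, (h p hp).2⟩

lemma IsMatch.snd_card {M : Finset (V × V)} (hM : IsMatch H M) :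
    (M.image Prod.snd).card = M.card := by
  apply Finset.card_image_of_injOn
  intro p hp q hq h
  by_contra hne
  exact (hM.2 p (Finset.mem_coe.mp hp) q (Finset.mem_coe.mp hq) hne).2.2.2 h

end Matching2

section PairCol
variable {V : Type*} [Fintype V] [DecidableEq V]

/-- A matching in the complement graph yields a clique cover with `n - M.card` classes. -/
lemma pair_colorable (G : SimpleGraph V) {M : Finset (V × V)} (hM : IsMatch Gᶜ M) :
    G.Colorable (Fintype.card V - M.card) := by
  classical
  set c : V → V := fun v => if h : ∃ p ∈ M, p.2 = v then (Classical.choose h).1 else v with hc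
  have hcspec : ∀ v (h : ∃ p ∈ M, p.2 = v),
      (Classical.choose h) ∈ M ∧ (Classical.choose h).2 = v := fun v h =>
    ⟨(Classical.choose_spec h).1, (Classical.choose_spec h).2⟩
  apply colorable_of_rep G _ c
  · intro u v hadj
    intro heq
    by_cases h1 : ∃ p ∈ M, p.2 = u <;> by_cases h2 : ∃ p ∈ M, p.2 = v
    · obtain ⟨hp, hpu⟩ := hcspec u h1
      obtain ⟨hq, hqv⟩ := hcspec v h2
      rw [hc] at heq
      simp only [dif_pos h1, dif_pos h2] at heq
      have hpq : Classical.choose h1 = Classical.choose h2 := by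
        by_contra hne
        exact (hM.2 _ hp _ hq hne).1 heq
      exact hadj.ne (by rw [← hpu, ← hqv, hpq])
    · obtain ⟨hp, hpu⟩ := hcspec u h1
      rw [hc] at heq
      simp only [dif_pos h1, dif_neg h2] at heq
      obtain ⟨p, hpM, e1, e2⟩ : ∃ p ∈ M, p.1 = v ∧ p.2 = u := ⟨_, hp, heq, hpu⟩
      have : Gᶜ.Adj v u := by rw [← e1, ← e2]; exact hM.1 _ hpM
      rw [compl_adj] at this
      exact this.2 hadj.symm
    · obtain ⟨hq, hqv⟩ := hcspec v h2
      rw [hc] at heq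
      simp only [dif_neg h1, dif_pos h2] at heq
      obtain ⟨p, hpM, e1, e2⟩ : ∃ p ∈ M, p.1 = u ∧ p.2 = v := ⟨_, hq, heq.symm, hqv⟩
      have : Gᶜ.Adj u v := by rw [← e1, ← e2]; exact hM.1 _ hpM
      rw [compl_adj] at this
      exact this.2 hadj
    · rw [hc] at heq
      simp only [dif_neg h1, dif_neg h2] at heq
      exact hadj.ne heq
  · have hsub : Finset.univ.image c ⊆ univ \ M.image Prod.snd := by
      intro x hx
      obtain ⟨v, _, hv⟩ := Finset.mem_image.mp hx
      rw [Finset.mem_sdiff]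
      refine ⟨Finset.mem_univ x, ?_⟩
      intro hmem
      obtain ⟨q, hq, hqx⟩ := Finset.mem_image.mp hmem
      by_cases h1 : ∃ p ∈ M, p.2 = v
      · obtain ⟨hp, hpv⟩ := hcspec v h1
        rw [hc] at hv
        simp only [dif_pos h1] at hv
        rcases eq_or_ne (Classical.choose h1) q with rfl | hne
        · exact (Gᶜ.adj_symm (hM.1 _ hp)).ne (by rw [hqx, hv])
        · exact (hM.2 _ hp _ hq hne).2.1 (by rw [hv, hqx])
      · rw [hc] at hv
        simp only [dif_neg h1] at hv
        exact h1 ⟨q, hq, by rw [hqx, hv]⟩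
    calc (Finset.univ.image c).card ≤ (univ \ M.image Prod.snd).card := Finset.card_le_card hsub
      _ = Fintype.card V - M.card := by
          rw [Finset.card_sdiff_of_subset (Finset.subset_univ _), hM.snd_card, Finset.card_univ]
end PairCol

section NoP3
variable {V : Type*} {G : SimpleGraph V}

lemma noP3K1 (hfree : ¬ Nonempty (P3UnionK1 ↪g G)) {a b c d : V}
    (hab : G.Adj a b) (hbc : G.Adj b c) (hac : ¬G.Adj a c) (hacne : a ≠ c)
    (hda : d ≠ a) (hdc : d ≠ c)
    (h1 : ¬G.Adj d a) (h2 : ¬G.Adj d b) (h3 : ¬G.Adj d c) : False := by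
  apply hfree
  have hdb : d ≠ b := fun h => h1 (h ▸ hab.symm)
  have hinj : Function.Injective (![a, b, c, d] : Fin 4 → V) := by
    intro i j h
    fin_cases i <;> fin_cases j <;> simp_all [Matrix.cons_val_zero, Matrix.cons_val_one] <;>
      first
      | rfl
      | (exact absurd h hab.ne)
      | (exact absurd h hab.ne')
      | (exact absurd h hbc.ne)
      | (exact absurd h hbc.ne')
      | (exact absurd h hacne)
      | (exact absurd h hacne.symm)
      | (exact absurd h hda.symm)
      | (exact absurd h hdb.symm)
      | (exact absurd h hdc.symm)
      | (exact absurd h hda)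
      | (exact absurd h hdb)
      | (exact absurd h hdc)
  refine ⟨⟨⟨![a, b, c, d], hinj⟩, ?_⟩⟩
  intro i j
  fin_cases i <;> fin_cases j <;>
    simp [P3UnionK1, SimpleGraph.fromRel_adj, Matrix.cons_val_zero, Matrix.cons_val_one,
      hab, hbc, hac, hacne, hda, hdb, hdc, G.irrefl] <;>
    first
    | (intro h; exact hac (h.symm))
    | (exact fun h => h1 h.symm)
    | (exact fun h => h2 h.symm)
    | (exact fun h => h3 h.symm)
    | (exact h1)
    | (exact h2)
    | (exact h3)
    | (exact hac)
    | (exact hab.symm)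
    | (exact hbc.symm)
    | decide
    | skip
end NoP3

section Alpha3
variable {V : Type*} [Fintype V] (G : SimpleGraph V) [DecidableRel G.Adj]

lemma case_alpha3 (hfree : ¬ Nonempty (P3UnionK1 ↪g G)) {y x1 x2 : V}
    (hd1 : y ≠ x1) (hd2 : y ≠ x2) (hd3 : x1 ≠ x2)
    (ha1 : ¬G.Adj y x1) (ha2 : ¬G.Adj y x2) (ha3 : ¬G.Adj x1 x2) :
    G.Colorable (max (G.maxDegree - 1) G.cliqueNum) := by
  classical
  set K := max (G.maxDegree - 1) G.cliqueNum with hK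
  -- "adjacent to two of the triple implies adjacent to all three"
  have h2yx1 : ∀ v, G.Adj v y → G.Adj v x1 → G.Adj v x2 := by
    intro v h1 h2
    by_contra hn
    exact noP3K1 hfree h1.symm h2 ha1 hd1 hd2.symm (fun h => hd3 h.symm)
      (fun h => ha2 h.symm) (fun h => hn h.symm) (fun h => ha3 h.symm)
  have h2yx2 : ∀ v, G.Adj v y → G.Adj v x2 → G.Adj v x1 := by
    intro v h1 h2
    by_contra hn
    exact noP3K1 hfree h1.symm h2 ha2 hd2 hd1.symm hd3
      (fun h => ha1 h.symm) (fun h => hn h.symm) ha3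
  have h2x1x2 : ∀ v, G.Adj v x1 → G.Adj v x2 → G.Adj v y := by
    intro v h1 h2
    by_contra hn
    exact noP3K1 hfree h1.symm h2 ha3 hd3 hd1 hd2
      ha1 (fun h => hn h.symm) ha2
  set S : Finset V := univ.filter (fun s => G.Adj s y ∧ G.Adj s x1 ∧ G.Adj s x2) with hS
  set C : Finset V := univ.filter (fun v => ¬(G.Adj v y ∧ G.Adj v x1 ∧ G.Adj v x2)) with hC
  have hmemCS : ∀ v, v ∉ C → v ∈ S := by
    intro v hv
    simp only [hC, Finset.mem_filter, Finset.mem_univ, true_and, not_not] at hv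
    simp only [hS, Finset.mem_filter, Finset.mem_univ, true_and]
    exact hv
  have hdisj : ∀ v, v ∈ C → v ∉ S := by
    intro v hv hvS
    simp only [hC, Finset.mem_filter, Finset.mem_univ, true_and] at hv
    simp only [hS, Finset.mem_filter, Finset.mem_univ, true_and] at hvS
    exact hv hvS
  -- two free triple elements for each vertex of C
  have htwo : ∀ v ∈ C, ∃ t1 t2 : V,
      (t1 = y ∨ t1 = x1 ∨ t1 = x2) ∧ (t2 = y ∨ t2 = x1 ∨ t2 = x2) ∧
      t1 ≠ t2 ∧ ¬G.Adj t1 t2 ∧ ¬G.Adj v t1 ∧ ¬G.Adj v t2 ∧ v ≠ t1 ∧ v ≠ t2 := by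
    intro v hv
    simp only [hC, Finset.mem_filter, Finset.mem_univ, true_and] at hv
    rcases eq_or_ne v y with rfl | hvy
    · exact ⟨x1, x2, Or.inr (Or.inl rfl), Or.inr (Or.inr rfl), hd3, ha3, ha1, ha2, hd1, hd2⟩
    rcases eq_or_ne v x1 with rfl | hvx1
    · exact ⟨y, x2, Or.inl rfl, Or.inr (Or.inr rfl), hd2, ha2,
        fun h => ha1 h.symm, ha3, hd1.symm, hd3⟩
    rcases eq_or_ne v x2 with rfl | hvx2
    · exact ⟨y, x1, Or.inl rfl, Or.inr (Or.inl rfl), hd1, ha1,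
        fun h => ha2 h.symm, fun h => ha3 h.symm, hd2.symm, hd3.symm⟩
    by_cases hy : G.Adj v y
    · have hx1 : ¬G.Adj v x1 := fun h => hv ⟨hy, h, h2yx1 v hy h⟩
      have hx2 : ¬G.Adj v x2 := fun h => hv ⟨hy, h2yx2 v hy h, h⟩
      exact ⟨x1, x2, Or.inr (Or.inl rfl), Or.inr (Or.inr rfl), hd3, ha3, hx1, hx2, hvx1, hvx2⟩
    by_cases hx1 : G.Adj v x1
    · have hx2 : ¬G.Adj v x2 := fun h => hv ⟨h2x1x2 v hx1 h, hx1, h⟩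
      exact ⟨y, x2, Or.inl rfl, Or.inr (Or.inr rfl), hd2, ha2, hy, hx2, hvy, hvx2⟩
    · exact ⟨y, x1, Or.inl rfl, Or.inr (Or.inl rfl), hd1, ha1, hy, hx1, hvy, hvx1⟩
  have hSadj : ∀ s ∈ S, ∀ t : V, (t = y ∨ t = x1 ∨ t = x2) → G.Adj s t := by
    intro s hs t ht
    simp only [hS, Finset.mem_filter, Finset.mem_univ, true_and] at hs
    rcases ht with rfl | rfl | rfl
    exacts [hs.1, hs.2.1, hs.2.2]
  -- S is joined to C
  have hjoin : ∀ s ∈ S, ∀ v ∈ C, G.Adj s v := by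
    intro s hs v hv
    by_contra hn
    obtain ⟨t1, t2, ht1, ht2, h12, hadj12, hv1, hv2, hne1, hne2⟩ := htwo v hv
    exact noP3K1 hfree (hSadj s hs t1 ht1).symm (hSadj s hs t2 ht2) hadj12 h12
      hne1 hne2 hv1 (fun h => hn h.symm) hv2
  -- triple is inside C
  have hyC : y ∈ C := by
    simp only [hC, Finset.mem_filter, Finset.mem_univ, true_and]
    exact fun h => G.irrefl h.1
  have hx1C : x1 ∈ C := by
    simp only [hC, Finset.mem_filter, Finset.mem_univ, true_and]
    exact fun h => ha1 h.1.symm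
  have hx2C : x2 ∈ C := by
    simp only [hC, Finset.mem_filter, Finset.mem_univ, true_and]
    exact fun h => ha2 h.1.symm
  have htriC : ∀ t : V, (t = y ∨ t = x1 ∨ t = x2) → t ∈ C := by
    rintro t (rfl | rfl | rfl) <;> assumption
  have hCcard : 3 ≤ C.card := by
    have : ({y, x1, x2} : Finset V) ⊆ C := by
      intro t ht
      simp only [Finset.mem_insert, Finset.mem_singleton] at ht
      exact htriC t ht
    calc 3 = ({y, x1, x2} : Finset V).card := by
            rw [Finset.card_insert_of_notMem (by simp [hd1, hd2]),
              Finset.card_insert_of_notMem (by simp [hd3]), Finset.card_singleton]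
      _ ≤ C.card := Finset.card_le_card this
  -- C-neighborhood bound
  have hCnbr : ∀ v ∈ C, (C.filter (fun w => G.Adj v w)).card ≤ C.card - 3 := by
    intro v hv
    obtain ⟨t1, t2, ht1, ht2, h12, _, hv1, hv2, hne1, hne2⟩ := htwo v hv
    have hsub : C.filter (fun w => G.Adj v w) ⊆ C \ {v, t1, t2} := by
      intro w hw
      rw [Finset.mem_filter] at hw
      rw [Finset.mem_sdiff]
      refine ⟨hw.1, ?_⟩
      simp only [Finset.mem_insert, Finset.mem_singleton]
      rintro (h | h | h) <;> rw [h] at hw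
      exacts [G.irrefl hw.2, hv1 hw.2, hv2 hw.2]
    have hsub2 : ({v, t1, t2} : Finset V) ⊆ C := by
      intro t ht
      simp only [Finset.mem_insert, Finset.mem_singleton] at ht
      rcases ht with h | h | h <;> rw [h]
      exacts [hv, htriC t1 ht1, htriC t2 ht2]
    have hcard3 : ({v, t1, t2} : Finset V).card = 3 := by
      rw [Finset.card_insert_of_notMem (by simp [hne1, hne2]),
        Finset.card_insert_of_notMem (by simp [h12]), Finset.card_singleton]
    calc (C.filter (fun w => G.Adj v w)).card ≤ (C \ {v, t1, t2}).card :=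
          Finset.card_le_card hsub
      _ = C.card - 3 := by rw [Finset.card_sdiff_of_subset hsub2, hcard3]
  rcases S.eq_empty_or_nonempty with hSe | ⟨s0, hs0⟩
  · -- G is a disjoint union of cliques; χ ≤ ω
    have hCall : ∀ v : V, v ∈ C := by
      intro v
      by_contra hv
      have := hmemCS v hv
      rw [hSe] at this
      exact absurd this (Finset.notMem_empty v)
    -- cluster property
    have hcluster : ∀ u v w : V, G.Adj u v → G.Adj v w → u ≠ w → G.Adj u w := by
      intro u v w huv hvw hnuw
      by_contra hadjuw
      obtain ⟨t1, t2, ht1, ht2, h12, hadj12, hv1, hv2, hne1, hne2⟩ := htwo v (hCall v)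
      -- claim: any z adjacent to v is "free" of both t1 and t2
      have hclaim : ∀ z : V, G.Adj z v → (¬G.Adj z t1 ∧ z ≠ t1) ∧ (¬G.Adj z t2 ∧ z ≠ t2) := by
        intro z hzv
        have hz1 : z ≠ t1 := by rintro rfl; exact hv1 hzv.symm
        have hz2 : z ≠ t2 := by rintro rfl; exact hv2 hzv.symm
        -- z cannot be adjacent to two triple elements (else z ∈ S = ∅)
        have hnot2 : ¬(G.Adj z t1 ∧ G.Adj z t2) := by
          rintro ⟨hzt1, hzt2⟩
          have hzS : z ∈ S := by
            simp only [hS, Finset.mem_filter, Finset.mem_univ, true_and]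
            rcases ht1 with rfl | rfl | rfl <;> rcases ht2 with rfl | rfl | rfl
            · exact absurd rfl h12
            · exact ⟨hzt1, hzt2, h2yx1 z hzt1 hzt2⟩
            · exact ⟨hzt1, h2yx2 z hzt1 hzt2, hzt2⟩
            · exact ⟨hzt2, hzt1, h2yx1 z hzt2 hzt1⟩
            · exact absurd rfl h12
            · exact ⟨h2x1x2 z hzt1 hzt2, hzt1, hzt2⟩
            · exact ⟨hzt2, h2yx2 z hzt2 hzt1, hzt1⟩
            · exact ⟨h2x1x2 z hzt2 hzt1, hzt2, hzt1⟩
            · exact absurd rfl h12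
          rw [hSe] at hzS
          exact absurd hzS (Finset.notMem_empty z)
        constructor
        · refine ⟨?_, hz1⟩
          intro hzt1
          -- P3 : t1 - z - v, isolated t2
          exact noP3K1 hfree hzt1.symm hzv (fun h => hv1 h.symm) (Ne.symm hne1)
            (Ne.symm h12) (Ne.symm hne2) (fun h => hadj12 h.symm)
            (fun h => hnot2 ⟨hzt1, h.symm⟩) (fun h => hv2 h.symm)
        · refine ⟨?_, hz2⟩
          intro hzt2
          -- P3 : t2 - z - v, isolated t1
          exact noP3K1 hfree hzt2.symm hzv (fun h => hv2 h.symm) (Ne.symm hne2)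
            h12 (Ne.symm hne1) hadj12
            (fun h => hnot2 ⟨h.symm, hzt2⟩) (fun h => hv1 h.symm)
      obtain ⟨⟨hu1, hu1e⟩, _⟩ := hclaim u huv
      obtain ⟨⟨hw1, hw1e⟩, _⟩ := hclaim w hvw.symm
      -- P3 : u - v - w, isolated t1
      exact noP3K1 hfree huv hvw hadjuw hnuw (Ne.symm hu1e) (Ne.symm hw1e)
        (fun h => hu1 h.symm) (fun h => hv1 h.symm) (fun h => hw1 h.symm)
    -- color greedily; closed neighborhoods are cliques of size ≤ cliqueNum
    obtain ⟨c, hc1, hc2⟩ := greedy_aux_s6 G univ (fun v => G.degree v + 1) (by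
      intro v _
      show (univ.filter (fun w => G.Adj v w)).card < G.degree v + 1
      have : univ.filter (fun w => G.Adj v w) = G.neighborFinset v := by
        ext w; simp [SimpleGraph.mem_neighborFinset]
      rw [this, SimpleGraph.card_neighborFinset_eq_degree]
      omega)
    have hdegclique : ∀ v : V, G.degree v + 1 ≤ G.cliqueNum := by
      intro v
      have hclique : G.IsClique (insert v (G.neighborFinset v) : Finset V) := by
        intro a ha b hb hab
        rw [Finset.coe_insert, Set.mem_insert_iff] at ha hb
        have hmm : ∀ x : V, x ∈ (↑(G.neighborFinset v) : Set V) → G.Adj v x := by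
          intro x hx
          rw [Finset.mem_coe, SimpleGraph.mem_neighborFinset] at hx
          exact hx
        rcases ha with rfl | ha <;> rcases hb with rfl | hb
        · exact absurd rfl hab
        · exact hmm b hb
        · exact (hmm a ha).symm
        · exact hcluster a v b (hmm a ha).symm (hmm b hb) hab
      have hcard : (insert v (G.neighborFinset v) : Finset V).card = G.degree v + 1 := by
        rw [Finset.card_insert_of_notMem (by simp), SimpleGraph.card_neighborFinset_eq_degree]
      calc G.degree v + 1 = (insert v (G.neighborFinset v) : Finset V).card := hcard.symm
        _ ≤ G.cliqueNum := hclique.card_le_cliqueNum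
    refine colorable_of_proper_nat G K c (fun v => ?_) (fun u v h => hc2 u (mem_univ u) v (mem_univ v) h)
    calc c v < G.degree v + 1 := by simpa using hc1 v (mem_univ v)
      _ ≤ G.cliqueNum := hdegclique v
      _ ≤ K := le_max_right _ _
  · -- S nonempty
    have hΔC : C.card ≤ G.maxDegree := by
      have hsub : C ⊆ G.neighborFinset s0 := by
        intro v hv
        rw [SimpleGraph.mem_neighborFinset]
        exact hjoin s0 hs0 v hv
      calc C.card ≤ G.degree s0 := by
            rw [← SimpleGraph.card_neighborFinset_eq_degree]
            exact Finset.card_le_card hsub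
        _ ≤ G.maxDegree := G.degree_le_maxDegree s0
    obtain ⟨c1, hc11, hc12⟩ := greedy_aux_s6 G C (fun _ => C.card - 2) (by
      intro v hv
      show (C.filter (fun w => G.Adj v w)).card < C.card - 2
      have := hCnbr v hv
      omega)
    obtain ⟨c2, hc21, hc22⟩ := greedy_aux_s6 G S
      (fun s => (S.filter (fun w => G.Adj s w)).card + 1) (by
        intro v _
        show (S.filter (fun w => G.Adj v w)).card < (S.filter (fun w => G.Adj v w)).card + 1
        omega)
    have hc11' : ∀ v ∈ C, c1 v < C.card - 2 := fun v hv => by simpa using hc11 v hv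
    have hc21' : ∀ s ∈ S, c2 s < (S.filter (fun w => G.Adj s w)).card + 1 :=
      fun v hv => by simpa using hc21 v hv
    have hSdeg : ∀ s ∈ S, (S.filter (fun w => G.Adj s w)).card + C.card ≤ G.degree s := by
      intro s hs
      have hsub : S.filter (fun w => G.Adj s w) ∪ C ⊆ G.neighborFinset s := by
        intro w hw
        rw [SimpleGraph.mem_neighborFinset]
        rcases Finset.mem_union.mp hw with hw | hw
        · exact (Finset.mem_filter.mp hw).2
        · exact hjoin s hs w hw
      have hdisj2 : Disjoint (S.filter (fun w => G.Adj s w)) C := by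
        rw [Finset.disjoint_left]
        intro w hw hwC
        exact hdisj w hwC (Finset.mem_filter.mp hw).1
      calc (S.filter (fun w => G.Adj s w)).card + C.card
          = (S.filter (fun w => G.Adj s w) ∪ C).card := (Finset.card_union_of_disjoint hdisj2).symm
        _ ≤ G.degree s := by
            rw [← SimpleGraph.card_neighborFinset_eq_degree]
            exact Finset.card_le_card hsub
    have hKD : G.maxDegree - 1 ≤ K := le_max_left _ _
    refine colorable_of_proper_nat G K
      (fun v => if v ∈ C then c1 v else (C.card - 2) + c2 v) (fun v => ?_) (fun u v hadj => ?_)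
    · by_cases hv : v ∈ C
      · have h1 := hc11' v hv
        simp only [if_pos hv]
        omega
      · have hvS := hmemCS v hv
        have h1 := hc21' v hvS
        have h2 := hSdeg v hvS
        have h3 := G.degree_le_maxDegree v
        simp only [if_neg hv]
        omega
    · by_cases hu : u ∈ C <;> by_cases hv : v ∈ C
      · simp only [if_pos hu, if_pos hv]
        exact hc12 u hu v hv hadj
      · have h1 := hc11' u hu
        simp only [if_pos hu, if_neg hv]
        omega
      · have h1 := hc11' v hv
        simp only [if_neg hu, if_pos hv]
        omega
      · have h1 := hc22 u (hmemCS u hu) v (hmemCS v hv) hadj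
        simp only [if_neg hu, if_neg hv]
        omega
end Alpha3

section Sparse
variable {V : Type*} [Fintype V] [DecidableEq V]

lemma sparse_case (G : SimpleGraph V) [DecidableRel G.Adj] (K δ n : ℕ)
    (hK1 : G.maxDegree - 1 ≤ K) (hK2 : G.cliqueNum ≤ K)
    (htf : ∀ a b c : V, Gᶜ.Adj a b → Gᶜ.Adj b c → Gᶜ.Adj a c → False)
    (hGadj : ∀ u v : V, u ≠ v → ¬Gᶜ.Adj u v → G.Adj u v)
    (hmindeg : ∀ v : V, δ ≤ Gᶜ.degree v)
    (hn : n = Fintype.card V)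
    (hdelta1 : n - 1 - δ ≤ G.maxDegree)
    (hsparse : 2 * δ + 4 ≤ n) : G.Colorable K := by
  classical
  set H := Gᶜ with hH
  -- a maximum matching
  obtain ⟨M₀, hM₀, hmax⟩ : ∃ M₀ : Finset (V × V), IsMatch H M₀ ∧
      ∀ M', IsMatch H M' → M'.card ≤ M₀.card := by
    set MS : Finset (Finset (V × V)) := univ.filter (fun M => IsMatch H M) with hMS
    have hnemp : MS.Nonempty := by
      refine ⟨∅, ?_⟩
      rw [hMS, Finset.mem_filter]
      exact ⟨Finset.mem_univ _,
        ⟨fun p hp => absurd hp (Finset.notMem_empty p),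
         fun p hp => absurd hp (Finset.notMem_empty p)⟩⟩
    obtain ⟨M₀, hM₀, hmax'⟩ := Finset.exists_max_image MS Finset.card hnemp
    rw [hMS, Finset.mem_filter] at hM₀
    refine ⟨M₀, hM₀.2, fun M' hM' => hmax' M' ?_⟩
    rw [hMS, Finset.mem_filter]
    exact ⟨Finset.mem_univ _, hM'⟩
  set m := M₀.card with hm
  by_cases hbig : δ + 2 ≤ m
  · -- a matching of size δ + 2 exists : Δ - 1 colors suffice
    obtain ⟨M', hM'sub, hM'card⟩ := Finset.exists_subset_card_eq (s := M₀) (n := δ + 2) hbig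
    have hM' : IsMatch H M' := IsMatch.subset hM'sub hM₀
    have hcol := pair_colorable G (M := M') hM'
    rw [hM'card] at hcol
    refine hcol.mono ?_
    omega
  · push_neg at hbig
    have hmδ : m ≤ δ + 1 := by omega
    set U := univ.filter (fun v => ExposedIn M₀ v) with hU
    have hUcard : U.card = n - 2 * m := by
      rw [hn, hm]
      exact hM₀.exposed_card (fun v => by rw [hU]; simp)
    have hUexp0 : ∀ u ∈ U, ExposedIn M₀ u := fun u hu => (Finset.mem_filter.mp hu).2
    have hm2n : 2 * m + 2 ≤ n := by omega
    obtain ⟨u₁, hu₁U, u₂, hu₂U, hu12⟩ : ∃ a ∈ U, ∃ b ∈ U, a ≠ b := by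
      apply Finset.one_lt_card.mp
      omega
    have hUind : ∀ u ∈ U, ∀ u' ∈ U, ¬H.Adj u u' := by
      intro u hu u' hu' hadj
      exact aug_edge hM₀ hmax (hUexp0 u hu) (hUexp0 u' hu') hadj
    -- orient the matching so that no second endpoint touches U
    set fswap : V × V → V × V :=
      (fun p => if ∃ u ∈ U, H.Adj u p.2 then (p.2, p.1) else p) with hfswap
    set M₂ := M₀.image fswap with hM2def
    have hend : ∀ p : V × V,
        ((fswap p).1 = p.1 ∧ (fswap p).2 = p.2 ∧ ¬∃ u ∈ U, H.Adj u p.2) ∨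
        ((fswap p).1 = p.2 ∧ (fswap p).2 = p.1 ∧ ∃ u ∈ U, H.Adj u p.2) := by
      intro p
      by_cases h : ∃ u ∈ U, H.Adj u p.2
      · right
        simp only [hfswap, if_pos h]
        exact ⟨trivial, trivial, h⟩
      · left
        simp only [hfswap, if_neg h]
        exact ⟨trivial, trivial, h⟩
    have hmem2 : ∀ q ∈ M₂, (q ∈ M₀ ∧ ¬∃ u ∈ U, H.Adj u q.2) ∨
        ((q.2, q.1) ∈ M₀ ∧ ∃ u ∈ U, H.Adj u q.1) := by
      intro q hq
      rw [hM2def] at hq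
      obtain ⟨p, hp, hpq⟩ := Finset.mem_image.mp hq
      rcases hend p with ⟨e1, e2, h⟩ | ⟨e1, e2, h⟩
      · left
        have hq2 : q = p := by
          rw [← hpq]
          exact Prod.ext e1 e2
        rw [hq2]
        exact ⟨hp, h⟩
      · right
        have hq2 : q = (p.2, p.1) := by
          rw [← hpq]
          exact Prod.ext e1 e2
        rw [hq2]
        exact ⟨hp, h⟩
    have hM₂ : IsMatch H M₂ := by
      constructor
      · intro q hq
        rcases hmem2 q hq with ⟨hqM, _⟩ | ⟨hqM, _⟩
        · exact hM₀.1 q hqM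
        · exact (hM₀.1 _ hqM).symm
      · intro q hq q' hq' hne
        have hq0 := hq
        have hq0' := hq'
        rw [hM2def] at hq0 hq0'
        obtain ⟨p, hp, hpq⟩ := Finset.mem_image.mp hq0
        obtain ⟨p', hp', hpq'⟩ := Finset.mem_image.mp hq0'
        have hpp' : p ≠ p' := by
          rintro rfl
          exact hne (hpq.symm.trans hpq')
        have hd := hM₀.2 p hp p' hp' hpp'
        rcases hend p with ⟨e1, e2, _⟩ | ⟨e1, e2, _⟩ <;>
          rcases hend p' with ⟨e3, e4, _⟩ | ⟨e3, e4, _⟩ <;>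
          rw [hpq] at e1 e2 <;> rw [hpq'] at e3 e4 <;>
          rw [e1, e2, e3, e4] <;> tauto
    have hcard2 : M₂.card = m := by
      rw [hM2def, hm]
      apply Finset.card_image_of_injOn
      intro p hp p' hp' heq
      by_contra hne
      have hd := hM₀.2 p (Finset.mem_coe.mp hp) p' (Finset.mem_coe.mp hp') hne
      have hfst := congrArg Prod.fst heq
      have hsnd := congrArg Prod.snd heq
      rcases hend p with ⟨e1, e2, _⟩ | ⟨e1, e2, _⟩ <;>
        rcases hend p' with ⟨e3, e4, _⟩ | ⟨e3, e4, _⟩ <;>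
        rw [e1, e3] at hfst <;> rw [e2, e4] at hsnd <;> tauto
    have hexp2 : ∀ x : V, ExposedIn M₂ x ↔ ExposedIn M₀ x := by
      intro x
      constructor
      · intro h p hp
        have hfp : fswap p ∈ M₂ := by
          rw [hM2def]
          exact Finset.mem_image_of_mem fswap hp
        have := h _ hfp
        rcases hend p with ⟨e1, e2, _⟩ | ⟨e1, e2, _⟩ <;> rw [e1, e2] at this <;> tauto
      · intro h q hq
        rcases hmem2 q hq with ⟨hqM, _⟩ | ⟨hqM, _⟩
        · exact h q hqM
        · have := h _ hqM
          exact ⟨this.2, this.1⟩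
    have hmax2 : ∀ M', IsMatch H M' → M'.card ≤ M₂.card := by
      intro M' hM'
      rw [hcard2]
      exact hmax M' hM'
    have hUexp2 : ∀ u ∈ U, ExposedIn M₂ u := fun u hu => (hexp2 u).mpr (hUexp0 u hu)
    have hclean : ∀ p ∈ M₂, ∀ u ∈ U, ¬H.Adj u p.2 := by
      intro p hp u hu hadj
      rcases hmem2 p hp with ⟨_, hno⟩ | ⟨hpM, u', hu', hadj'⟩
      · exact hno ⟨u, hu, hadj⟩
      · by_cases huu : u = u'
        · subst huu
          exact htf u p.2 p.1 hadj (hM₀.1 _ hpM) hadj'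
        · exact aug3 hM₀ hmax hpM (hUexp0 u hu) (hUexp0 u' hu') huu hadj hadj'.symm
    have hEu : ∀ u ∈ U, δ ≤ (M₂.filter (fun p => H.Adj u p.1)).card := by
      intro u hu
      have hsub : H.neighborFinset u ⊆ (M₂.filter (fun p => H.Adj u p.1)).image Prod.fst := by
        intro w hw
        rw [SimpleGraph.mem_neighborFinset] at hw
        by_cases hwexp : ExposedIn M₂ w
        · exfalso
          have hwU : w ∈ U := by
            rw [hU, Finset.mem_filter]
            exact ⟨Finset.mem_univ _, (hexp2 w).mp hwexp⟩
          exact hUind u hu w hwU hw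
        · rw [ExposedIn] at hwexp
          push_neg at hwexp
          obtain ⟨p, hp, hpw⟩ := hwexp
          have hw2 : w = p.1 ∨ w = p.2 := by tauto
          rcases hw2 with rfl | rfl
          · exact Finset.mem_image_of_mem _ (Finset.mem_filter.mpr ⟨hp, hw⟩)
          · exact absurd hw (hclean p hp u hu)
      calc δ ≤ H.degree u := hmindeg u
        _ = (H.neighborFinset u).card := (SimpleGraph.card_neighborFinset_eq_degree _ _).symm
        _ ≤ ((M₂.filter (fun p => H.Adj u p.1)).image Prod.fst).card := Finset.card_le_card hsub
        _ ≤ (M₂.filter (fun p => H.Adj u p.1)).card := Finset.card_image_le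
    set F := M₂.filter (fun p => ¬∃ u ∈ U, H.Adj u p.1) with hF
    have hFcard : F.card ≤ 1 := by
      have hsub : M₂.filter (fun p => H.Adj u₁ p.1) ⊆ M₂ \ F := by
        intro p hp
        rw [Finset.mem_filter] at hp
        rw [Finset.mem_sdiff, hF, Finset.mem_filter]
        push_neg
        exact ⟨hp.1, fun _ => ⟨u₁, hu₁U, hp.2⟩⟩
      have h1 := hEu u₁ hu₁U
      have h2 := Finset.card_le_card hsub
      have h3 : (M₂ \ F).card = M₂.card - F.card :=
        Finset.card_sdiff_of_subset (Finset.filter_subset _ _)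
      have h4 : F.card ≤ M₂.card := Finset.card_le_card (Finset.filter_subset _ _)
      rw [hcard2] at h3 h4
      omega
    have hconf : ∀ p ∈ M₂, ∀ q ∈ M₂, p ≠ q → H.Adj p.2 q.2 →
        (∃ u ∈ U, H.Adj u p.1) → (∃ u ∈ U, H.Adj u q.1) → False := by
      rintro p hp q hq hpq hcadj ⟨u, hu, hup⟩ ⟨u', hu', huq⟩
      by_cases huu : u = u'
      · subst huu
        set u'' := if u₁ = u then u₂ else u₁ with hu''
        have hu''U : u'' ∈ U := by
          rw [hu'']
          split <;> assumption
        have hu''ne : u'' ≠ u := by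
          rw [hu'']
          split
          · rename_i hh
            rw [← hh]
            exact hu12.symm
          · assumption
        have hcover : H.Adj u'' p.1 ∨ H.Adj u'' q.1 := by
          by_contra hno
          push_neg at hno
          have hsub2 : M₂.filter (fun r => H.Adj u'' r.1) ⊆ M₂ \ {p, q} := by
            intro r hr
            rw [Finset.mem_filter] at hr
            rw [Finset.mem_sdiff, Finset.mem_insert, Finset.mem_singleton]
            refine ⟨hr.1, ?_⟩
            rintro (rfl | rfl)
            · exact hno.1 hr.2
            · exact hno.2 hr.2
          have h1 := hEu u'' hu''U
          have h2 := Finset.card_le_card hsub2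
          have hpqsub : ({p, q} : Finset (V × V)) ⊆ M₂ := by
            intro x hx
            rw [Finset.mem_insert, Finset.mem_singleton] at hx
            rcases hx with rfl | rfl <;> assumption
          have h3 : (M₂ \ ({p, q} : Finset (V × V))).card = M₂.card - 2 := by
            rw [Finset.card_sdiff_of_subset hpqsub, Finset.card_insert_of_notMem (by simp [hpq]),
              Finset.card_singleton]
          have h4 : 2 ≤ M₂.card := Finset.one_lt_card.mpr ⟨p, hp, q, hq, hpq⟩
          rw [hcard2] at h3 h4
          omega
        rcases hcover with hcov | hcov
        · exact aug5 hM₂ hmax2 hp hq hpq (hUexp2 u'' hu''U) (hUexp2 u hu) hu''ne hcov hcadj huq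
        · exact aug5 hM₂ hmax2 hp hq hpq (hUexp2 u hu) (hUexp2 u'' hu''U)
            (Ne.symm hu''ne) hup hcadj hcov
      · exact aug5 hM₂ hmax2 hp hq hpq (hUexp2 u hu) (hUexp2 u' hu') huu hup hcadj huq
    -- a conflict-free reorientation
    have hstar : ∃ MS : Finset (V × V), IsMatch H MS ∧ MS.card = m ∧
        (∀ x, ExposedIn MS x ↔ ExposedIn M₂ x) ∧
        (∀ p ∈ MS, ∀ u ∈ U, ¬H.Adj u p.2) ∧
        (∀ p ∈ MS, ∀ q ∈ MS, p ≠ q → ¬H.Adj p.2 q.2) := by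
      have hF01 : F.card = 0 ∨ F.card = 1 := by omega
      rcases hF01 with hF0 | hF1
      · refine ⟨M₂, hM₂, hcard2, fun x => Iff.rfl, hclean, ?_⟩
        intro p hp q hq hpq hc
        have hcontact : ∀ r ∈ M₂, ∃ u ∈ U, H.Adj u r.1 := by
          intro r hr
          by_contra hno
          have hrF : r ∈ F := by
            rw [hF, Finset.mem_filter]
            exact ⟨hr, hno⟩
          rw [Finset.card_eq_zero] at hF0
          rw [hF0] at hrF
          exact Finset.notMem_empty r hrF
        exact hconf p hp q hq hpq hc (hcontact p hp) (hcontact q hq)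
      · obtain ⟨p₀, hFp₀⟩ := Finset.card_eq_one.mp hF1
        have hp₀F : p₀ ∈ F := hFp₀ ▸ Finset.mem_singleton_self p₀
        have hp₀M : p₀ ∈ M₂ := (Finset.mem_filter.mp hp₀F).1
        have hp₀no : ¬∃ u ∈ U, H.Adj u p₀.1 := (Finset.mem_filter.mp hp₀F).2
        have hAllAdj : ∀ u ∈ U, ∀ q ∈ M₂, q ≠ p₀ → H.Adj u q.1 := by
          intro u hu q hq hqp
          have hEuEq : M₂.filter (fun p => H.Adj u p.1) = M₂.erase p₀ := by
            apply Finset.eq_of_subset_of_card_le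
            · intro r hr
              rw [Finset.mem_filter] at hr
              rw [Finset.mem_erase]
              refine ⟨?_, hr.1⟩
              rintro rfl
              exact hp₀no ⟨u, hu, hr.2⟩
            · have h1 := hEu u hu
              have h2 : (M₂.erase p₀).card = m - 1 := by
                rw [Finset.card_erase_of_mem hp₀M, hcard2]
              omega
          have hqe : q ∈ M₂.erase p₀ := Finset.mem_erase.mpr ⟨hqp, hq⟩
          rw [← hEuEq] at hqe
          exact (Finset.mem_filter.mp hqe).2
        by_cases hc2 : ∃ q ∈ M₂, q ≠ p₀ ∧ H.Adj p₀.2 q.2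
        · obtain ⟨q₀, hq₀, hq₀ne, hq₀adj⟩ := hc2
          have hc1 : ¬∃ r ∈ M₂, r ≠ p₀ ∧ H.Adj p₀.1 r.2 := by
            rintro ⟨r, hr, hrne, hradj⟩
            have hqr : q₀ ≠ r := by
              rintro rfl
              exact htf p₀.1 p₀.2 q₀.2 (hM₂.1 p₀ hp₀M) hq₀adj hradj
            exact aug7 hM₂ hmax2 hp₀M hq₀ hr (Ne.symm hq₀ne) (Ne.symm hrne) hqr
              (hUexp2 u₁ hu₁U) (hUexp2 u₂ hu₂U) hu12
              (hAllAdj u₁ hu₁U q₀ hq₀ hq₀ne) hq₀adj.symm hradj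
              (hAllAdj u₂ hu₂U r hr hrne).symm
          have hins := (IsMatch.subset (Finset.erase_subset p₀ M₂) hM₂).insert'
            (hM₂.1 p₀ hp₀M).symm
            (hM₂.snd_exposed hp₀M (Finset.Subset.refl _))
            (hM₂.fst_exposed hp₀M (Finset.Subset.refl _))
          refine ⟨insert (p₀.2, p₀.1) (M₂.erase p₀), hins.1, ?_, ?_, ?_, ?_⟩
          · have h1m : 1 ≤ M₂.card := Finset.card_pos.mpr ⟨p₀, hp₀M⟩
            rw [hcard2] at h1m
            rw [hins.2, Finset.card_erase_of_mem hp₀M, hcard2]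
            omega
          · intro x
            constructor
            · intro h p hp
              by_cases hpp : p = p₀
              · subst hpp
                have := h _ (Finset.mem_insert_self _ _)
                exact ⟨this.2, this.1⟩
              · exact h p (Finset.mem_insert_of_mem (Finset.mem_erase.mpr ⟨hpp, hp⟩))
            · intro h q hq
              rcases Finset.mem_insert.mp hq with rfl | hq
              · have := h p₀ hp₀M
                exact ⟨this.2, this.1⟩
              · exact h q (Finset.mem_of_mem_erase hq)
          · intro p hp u hu hadj
            rcases Finset.mem_insert.mp hp with rfl | hp
            · exact hp₀no ⟨u, hu, hadj⟩
            · exact hclean p (Finset.mem_of_mem_erase hp) u hu hadj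
          · intro p hp q hq hpq hcadj
            rcases Finset.mem_insert.mp hp with rfl | hp <;>
              rcases Finset.mem_insert.mp hq with rfl | hq
            · exact hpq rfl
            · exact hc1 ⟨q, Finset.mem_of_mem_erase hq, Finset.ne_of_mem_erase hq, hcadj⟩
            · exact hc1 ⟨p, Finset.mem_of_mem_erase hp, Finset.ne_of_mem_erase hp, hcadj.symm⟩
            · exact hconf p (Finset.mem_of_mem_erase hp) q (Finset.mem_of_mem_erase hq) hpq hcadj
                ⟨u₁, hu₁U, hAllAdj u₁ hu₁U p (Finset.mem_of_mem_erase hp) (Finset.ne_of_mem_erase hp)⟩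
                ⟨u₁, hu₁U, hAllAdj u₁ hu₁U q (Finset.mem_of_mem_erase hq) (Finset.ne_of_mem_erase hq)⟩
        · push_neg at hc2
          refine ⟨M₂, hM₂, hcard2, fun x => Iff.rfl, hclean, ?_⟩
          intro p hp q hq hpq hcadj
          by_cases hpp0 : p = p₀
          · subst hpp0
            have hqne : q ≠ p := fun h => hpq h.symm
            exact hc2 q hq hqne hcadj
          · by_cases hqp0 : q = p₀
            · subst hqp0
              exact hc2 p hp hpp0 hcadj.symm
            · exact hconf p hp q hq hpq hcadj
                ⟨u₁, hu₁U, hAllAdj u₁ hu₁U p hp hpp0⟩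
                ⟨u₁, hu₁U, hAllAdj u₁ hu₁U q hq hqp0⟩
    obtain ⟨MS, hMS, hMScard, hMSexp, hMSclean, hMSconf⟩ := hstar
    have hcol := pair_colorable G (M := MS) hMS
    rw [hMScard] at hcol
    -- the large clique U ∪ seconds(MS)
    have hKSclique : G.IsClique ((U ∪ MS.image Prod.snd : Finset V) : Set V) := by
      intro x hx y hy hxy
      rw [Finset.mem_coe, Finset.mem_union] at hx hy
      rcases hx with hx | hx <;> rcases hy with hy | hy
      · exact hGadj x y hxy (hUind x hx y hy)
      · obtain ⟨p, hp, rfl⟩ := Finset.mem_image.mp hy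
        exact hGadj x p.2 hxy (hMSclean p hp x hx)
      · obtain ⟨p, hp, rfl⟩ := Finset.mem_image.mp hx
        exact hGadj p.2 y hxy (fun h => hMSclean p hp y hy h.symm)
      · obtain ⟨p, hp, rfl⟩ := Finset.mem_image.mp hx
        obtain ⟨q, hq, rfl⟩ := Finset.mem_image.mp hy
        have hpq : p ≠ q := by
          rintro rfl
          exact hxy rfl
        exact hGadj p.2 q.2 hxy (hMSconf p hp q hq hpq)
    have hKScard : (U ∪ MS.image Prod.snd).card = n - m := by
      have hdisj : Disjoint U (MS.image Prod.snd) := by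
        rw [Finset.disjoint_left]
        intro x hx hximg
        obtain ⟨p, hp, hpx⟩ := Finset.mem_image.mp hximg
        have hexp : ExposedIn MS x := (hMSexp x).mpr (hUexp2 x hx)
        exact (hexp p hp).2 hpx.symm
      rw [Finset.card_union_of_disjoint hdisj, hMS.snd_card, hMScard, hUcard]
      omega
    have hclq : n - m ≤ G.cliqueNum := by
      rw [← hKScard]
      exact hKSclique.card_le_cliqueNum
    refine hcol.mono ?_
    rw [← hn]
    omega
end Sparse

section A2
variable {V : Type*} [Fintype V] [DecidableEq V]

lemma case_alpha2 (G : SimpleGraph V) [DecidableRel G.Adj]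
    (hΔ : 9 ≤ G.maxDegree)
    (hα : ∀ y x1 x2 : V, y ≠ x1 → y ≠ x2 → x1 ≠ x2 →
      ¬G.Adj y x1 → ¬G.Adj y x2 → ¬G.Adj x1 x2 → False) :
    G.Colorable (max (G.maxDegree - 1) G.cliqueNum) := by
  classical
  set K := max (G.maxDegree - 1) G.cliqueNum with hK
  set H := Gᶜ with hH
  set n := Fintype.card V with hn
  -- triangle-freeness of the complement
  have htf : ∀ a b c : V, H.Adj a b → H.Adj b c → H.Adj a c → False := by
    intro a b c h1 h2 h3
    rw [hH, compl_adj] at h1 h2 h3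
    exact hα a b c h1.1 h3.1 h2.1 h1.2 h3.2 h2.2
  have hGadj : ∀ u v : V, u ≠ v → ¬H.Adj u v → G.Adj u v := by
    intro u v hne hnadj
    by_contra hg
    exact hnadj (by rw [hH, compl_adj]; exact ⟨hne, hg⟩)
  haveI hne : Nonempty V := by
    by_contra h
    rw [not_nonempty_iff] at h
    have : G.maxDegree = 0 := by
      rw [SimpleGraph.maxDegree]
      simp
    omega
  -- the minimum degree of the complement
  set δ := H.minDegree with hδ
  have hdelta1 : n - 1 - δ ≤ G.maxDegree := by
    obtain ⟨v, hv⟩ := H.exists_minimal_degree_vertex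
    have h1 : H.degree v = n - 1 - G.degree v := G.degree_compl v
    have h2 : G.degree v < n := by
      rw [hn]; exact G.degree_lt_card_verts v
    have h3 := G.degree_le_maxDegree v
    omega
  have hdelta2 : δ + 10 ≤ n := by
    obtain ⟨w, hw⟩ := G.exists_maximal_degree_vertex
    have h1 : H.degree w = n - 1 - G.degree w := G.degree_compl w
    have h2 := H.minDegree_le_degree w
    have h3 : G.degree w < n := by
      rw [hn]; exact G.degree_lt_card_verts w
    omega
  have hmindeg : ∀ v : V, δ ≤ H.degree v := fun v => H.minDegree_le_degree v
  by_cases hdense : n ≤ 2 * δ + 3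
  · -- DENSE CASE
    have hδ7 : 7 ≤ δ := by omega
    -- no closed 5-walks in H
    have hno5 : ∀ a b c d e : V, H.Adj a b → H.Adj b c → H.Adj c d → H.Adj d e →
        H.Adj e a → False := by
      intro a b c d e h1 h2 h3 h4 h5
      have hdegsum : ∀ x : V, H.degree x = ∑ v : V, (if H.Adj x v then 1 else 0) := by
        intro x
        have e1 : H.neighborFinset x = univ.filter (fun v => H.Adj x v) := by
          ext w
          simp [SimpleGraph.mem_neighborFinset]
        rw [← SimpleGraph.card_neighborFinset_eq_degree, e1, Finset.card_filter]
      -- local bound : each vertex sees at most 2 of a,b,c,d,e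
      have hlocal : ∀ v : V,
          ((if H.Adj a v then 1 else 0) + (if H.Adj b v then 1 else 0)
            + (if H.Adj c v then 1 else 0) + (if H.Adj d v then 1 else 0)
            + (if H.Adj e v then 1 else 0) : ℕ) ≤ 2 := by
        intro v
        have p1 : ¬(H.Adj a v ∧ H.Adj b v) := fun ⟨x1, x2⟩ => htf v a b x1.symm h1 x2.symm
        have p2 : ¬(H.Adj b v ∧ H.Adj c v) := fun ⟨x1, x2⟩ => htf v b c x1.symm h2 x2.symm
        have p3 : ¬(H.Adj c v ∧ H.Adj d v) := fun ⟨x1, x2⟩ => htf v c d x1.symm h3 x2.symm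
        have p4 : ¬(H.Adj d v ∧ H.Adj e v) := fun ⟨x1, x2⟩ => htf v d e x1.symm h4 x2.symm
        have p5 : ¬(H.Adj e v ∧ H.Adj a v) := fun ⟨x1, x2⟩ => htf v e a x1.symm h5 x2.symm
        have g1 : ((if H.Adj a v then 1 else 0) + (if H.Adj b v then 1 else 0) : ℕ) ≤ 1 := by
          by_cases q1 : H.Adj a v <;> by_cases q2 : H.Adj b v <;> simp [q1, q2]
          exact p1 ⟨q1, q2⟩
        have g2 : ((if H.Adj b v then 1 else 0) + (if H.Adj c v then 1 else 0) : ℕ) ≤ 1 := by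
          by_cases q1 : H.Adj b v <;> by_cases q2 : H.Adj c v <;> simp [q1, q2]
          exact p2 ⟨q1, q2⟩
        have g3 : ((if H.Adj c v then 1 else 0) + (if H.Adj d v then 1 else 0) : ℕ) ≤ 1 := by
          by_cases q1 : H.Adj c v <;> by_cases q2 : H.Adj d v <;> simp [q1, q2]
          exact p3 ⟨q1, q2⟩
        have g4 : ((if H.Adj d v then 1 else 0) + (if H.Adj e v then 1 else 0) : ℕ) ≤ 1 := by
          by_cases q1 : H.Adj d v <;> by_cases q2 : H.Adj e v <;> simp [q1, q2]
          exact p4 ⟨q1, q2⟩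
        have g5 : ((if H.Adj e v then 1 else 0) + (if H.Adj a v then 1 else 0) : ℕ) ≤ 1 := by
          by_cases q1 : H.Adj e v <;> by_cases q2 : H.Adj a v <;> simp [q1, q2]
          exact p5 ⟨q1, q2⟩
        omega
      have hsum : 5 * δ ≤ 2 * n := by
        have hle : H.degree a + H.degree b + H.degree c + H.degree d + H.degree e
            ≤ 2 * n := by
          rw [hdegsum a, hdegsum b, hdegsum c, hdegsum d, hdegsum e]
          rw [← Finset.sum_add_distrib, ← Finset.sum_add_distrib, ← Finset.sum_add_distrib,
            ← Finset.sum_add_distrib]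
          calc (∑ v : V, ((if H.Adj a v then 1 else 0) + (if H.Adj b v then 1 else 0)
              + (if H.Adj c v then 1 else 0) + (if H.Adj d v then 1 else 0)
              + (if H.Adj e v then 1 else 0) : ℕ))
              ≤ ∑ _v : V, 2 := Finset.sum_le_sum (fun v _ => hlocal v)
            _ = 2 * n := by rw [Finset.sum_const, Finset.card_univ, smul_eq_mul, hn, mul_comm]
        have q1 := hmindeg a
        have q2 := hmindeg b
        have q3 := hmindeg c
        have q4 := hmindeg d
        have q5 := hmindeg e
        omega
      omega
    -- build the bipartition
    obtain ⟨a⟩ := hne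
    have hdeg0 : 0 < H.degree a := lt_of_lt_of_le (by omega) (hmindeg a)
    obtain ⟨b0, hab⟩ := (H.degree_pos_iff_exists_adj a).mp hdeg0
    set A := H.neighborFinset b0 with hA
    set B := H.neighborFinset a with hB
    have hmemA : ∀ x, x ∈ A ↔ H.Adj b0 x := fun x => H.mem_neighborFinset b0 x
    have hmemB : ∀ x, x ∈ B ↔ H.Adj a x := fun x => H.mem_neighborFinset a x
    have hAB : ∀ x, x ∈ A → x ∈ B → False := by
      intro x hxA hxB
      exact htf a x b0 ((hmemB x).mp hxB) ((hmemA x).mp hxA).symm hab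
    set W := (univ \ A) \ B with hW
    have hmemW : ∀ x, x ∈ W ↔ (x ∉ A ∧ x ∉ B) := by
      intro x
      rw [hW]
      simp only [Finset.mem_sdiff, Finset.mem_univ, true_and]
    have hWcard : W.card + 2 * δ ≤ n := by
      have hcA : δ ≤ A.card := by
        rw [hA, SimpleGraph.card_neighborFinset_eq_degree]
        exact hmindeg b0
      have hcB : δ ≤ B.card := by
        rw [hB, SimpleGraph.card_neighborFinset_eq_degree]
        exact hmindeg a
      have hdisjAB : Disjoint A B := by
        rw [Finset.disjoint_left]
        exact fun x hx hx' => hAB x hx hx'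
      have hWeq : W = univ \ (A ∪ B) := by
        ext x
        rw [hW]
        simp only [Finset.mem_sdiff, Finset.mem_univ, true_and, Finset.mem_union]
        tauto
      have h1 : W.card = n - (A.card + B.card) := by
        rw [hWeq, Finset.card_sdiff_of_subset (Finset.subset_univ _), Finset.card_univ,
          Finset.card_union_of_disjoint hdisjAB]
      have h2 : A.card + B.card ≤ n := by
        rw [← Finset.card_union_of_disjoint hdisjAB]
        calc #(A ∪ B) ≤ #(univ : Finset V) := Finset.card_le_card (Finset.subset_univ _)
          _ = n := Finset.card_univ
      omega
    have hWnbrB : ∀ w ∈ W, (∀ p ∈ A, ¬H.Adj w p) → ∃ q ∈ B, H.Adj w q := by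
      intro w hw hnoA
      by_contra hnoB
      push_neg at hnoB
      have hsub : H.neighborFinset w ⊆ W.erase w := by
        intro x hx
        rw [SimpleGraph.mem_neighborFinset] at hx
        rw [Finset.mem_erase]
        refine ⟨fun h => H.irrefl (h ▸ hx), (hmemW x).mpr ⟨?_, ?_⟩⟩
        · intro hxA
          exact hnoA x hxA hx
        · intro hxB
          exact hnoB x hxB hx
      have h1 : H.degree w ≤ W.card - 1 := by
        rw [← SimpleGraph.card_neighborFinset_eq_degree]
        calc (H.neighborFinset w).card ≤ (W.erase w).card := Finset.card_le_card hsub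
          _ = W.card - 1 := Finset.card_erase_of_mem hw
      have h2 := hmindeg w
      omega
    set PA := A ∪ W.filter (fun w => ∀ p ∈ A, ¬H.Adj w p) with hPA
    set PB := univ \ PA with hPB
    have hIndA : ∀ x ∈ PA, ∀ y ∈ PA, x ≠ y → ¬H.Adj x y := by
      intro x hx y hy hxy hadj
      rw [hPA, Finset.mem_union] at hx hy
      rcases hx with hx | hx <;> rcases hy with hy | hy
      · exact htf x y b0 hadj ((hmemA y).mp hy).symm ((hmemA x).mp hx).symm
      · rw [Finset.mem_filter] at hy
        exact hy.2 x hx hadj.symm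
      · rw [Finset.mem_filter] at hx
        exact hx.2 y hy hadj
      · rw [Finset.mem_filter] at hx hy
        obtain ⟨q, hqB, hq⟩ := hWnbrB x hx.1 hx.2
        obtain ⟨q', hq'B, hq'⟩ := hWnbrB y hy.1 hy.2
        exact hno5 x q a q' y hq ((hmemB q).mp hqB).symm ((hmemB q').mp hq'B) hq'.symm hadj.symm
    have hmemPB : ∀ x ∈ PB, x ∈ B ∨ (x ∈ W ∧ ∃ p ∈ A, H.Adj x p) := by
      intro x hx
      rw [hPB, Finset.mem_sdiff] at hx
      have hx2 := hx.2
      rw [hPA, Finset.mem_union] at hx2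
      push_neg at hx2
      by_cases hxB : x ∈ B
      · exact Or.inl hxB
      · have hxW : x ∈ W := (hmemW x).mpr ⟨hx2.1, hxB⟩
        have := hx2.2
        rw [Finset.mem_filter] at this
        push_neg at this
        obtain ⟨p, hp, hpadj⟩ := this hxW
        exact Or.inr ⟨hxW, p, hp, hpadj⟩
    have hIndB : ∀ x ∈ PB, ∀ y ∈ PB, x ≠ y → ¬H.Adj x y := by
      intro x hx y hy hxy hadj
      rcases hmemPB x hx with hxB | ⟨hxW, p, hpA, hp⟩ <;>
        rcases hmemPB y hy with hyB | ⟨hyW, p', hp'A, hp'⟩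
      · exact htf a x y ((hmemB x).mp hxB) hadj ((hmemB y).mp hyB)
      · exact hno5 y p' b0 a x hp' ((hmemA p').mp hp'A).symm hab.symm ((hmemB x).mp hxB) hadj
      · exact hno5 x p b0 a y hp ((hmemA p).mp hpA).symm hab.symm ((hmemB y).mp hyB) hadj.symm
      · exact hno5 x p b0 p' y hp ((hmemA p).mp hpA).symm ((hmemA p').mp hp'A) hp'.symm hadj.symm
    -- Hall-based coloring given a partition into two H-independent parts
    have key : ∀ P Q : Finset V, (∀ v : V, v ∈ Q ↔ v ∉ P) →
        (∀ x ∈ P, ∀ y ∈ P, x ≠ y → ¬H.Adj x y) →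
        (∀ x ∈ Q, ∀ y ∈ Q, x ≠ y → ¬H.Adj x y) →
        P.card ≤ Q.card → G.Colorable K := by
      intro P Q hQP hIP hIQ hcle
      have hQeq : Q = univ \ P := by
        ext x
        simp [Finset.mem_sdiff, hQP x]
      have hPn : P.card ≤ n := by
        rw [hn, ← Finset.card_univ]
        exact Finset.card_le_card (Finset.subset_univ _)
      have hcardPQ : P.card + Q.card = n := by
        rw [hQeq, Finset.card_sdiff_of_subset (Finset.subset_univ _), Finset.card_univ]
        omega
      have hPle : P.card ≤ δ + 1 := by omega
      have hall : ∀ s : Finset ↥P, s.card ≤ (s.biUnion (fun x => H.neighborFinset ↑x)).card := by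
        intro s
        rcases s.eq_empty_or_nonempty with rfl | ⟨x, hx⟩
        · simp
        have hsP : s.card ≤ P.card := by
          have h1 : s.card ≤ Fintype.card ↥P := Finset.card_le_univ s
          rwa [Fintype.card_coe] at h1
        by_cases hsc : s.card ≤ δ
        · calc s.card ≤ δ := hsc
            _ ≤ H.degree ↑x := hmindeg _
            _ = (H.neighborFinset (↑x : V)).card :=
                (SimpleGraph.card_neighborFinset_eq_degree _ _).symm
            _ ≤ (s.biUnion (fun x => H.neighborFinset ↑x)).card :=
                Finset.card_le_card
                  (Finset.subset_biUnion_of_mem (fun x : ↥P => H.neighborFinset ↑x) hx)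
        · have hsuniv : s = Finset.univ := by
            apply Finset.eq_univ_of_card
            rw [Fintype.card_coe]
            omega
          have hQsub : Q ⊆ s.biUnion (fun x => H.neighborFinset ↑x) := by
            intro q hq
            have hdq : 0 < H.degree q := lt_of_lt_of_le (by omega) (hmindeg q)
            obtain ⟨w, hw⟩ := (H.degree_pos_iff_exists_adj q).mp hdq
            have hwP : w ∈ P := by
              by_contra hwp
              exact hIQ q hq w ((hQP w).mpr hwp) hw.ne hw
            rw [Finset.mem_biUnion]
            refine ⟨⟨w, hwP⟩, hsuniv ▸ Finset.mem_univ _, ?_⟩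
            rw [SimpleGraph.mem_neighborFinset]
            exact hw.symm
          calc s.card ≤ P.card := hsP
            _ ≤ Q.card := hcle
            _ ≤ _ := Finset.card_le_card hQsub
      obtain ⟨f, hfinj, hf⟩ := (Finset.all_card_le_biUnion_card_iff_existsInjective' _).mp hall
      have hfadj : ∀ x : ↥P, H.Adj ↑x (f x) := by
        intro x
        have := hf x
        rwa [SimpleGraph.mem_neighborFinset] at this
      have hfQ : ∀ x : ↥P, f x ∉ P := by
        intro x hfx
        exact hIP ↑x x.2 (f x) hfx (hfadj x).ne (hfadj x)
      set c : V → V := fun v => if h : ∃ x : ↥P, f x = v then ↑(Classical.choose h) else v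
        with hc
      have hcol : G.Colorable Q.card := by
        apply colorable_of_rep G _ c
        · intro u v hadj heq
          by_cases h1 : ∃ x : ↥P, f x = u <;> by_cases h2 : ∃ x : ↥P, f x = v
          · have e1 : f (Classical.choose h1) = u := Classical.choose_spec h1
            have e2 : f (Classical.choose h2) = v := Classical.choose_spec h2
            simp only [hc, dif_pos h1, dif_pos h2] at heq
            have hxy : Classical.choose h1 = Classical.choose h2 := Subtype.coe_injective heq
            exact hadj.ne (by rw [← e1, ← e2, hxy])
          · have e1 : f (Classical.choose h1) = u := Classical.choose_spec h1
            simp only [hc, dif_pos h1, dif_neg h2] at heq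
            have hAdj := hfadj (Classical.choose h1)
            rw [e1] at hAdj
            rw [heq] at hAdj
            rw [hH, compl_adj] at hAdj
            exact hAdj.2 hadj.symm
          · have e2 : f (Classical.choose h2) = v := Classical.choose_spec h2
            simp only [hc, dif_neg h1, dif_pos h2] at heq
            have hAdj := hfadj (Classical.choose h2)
            rw [e2] at hAdj
            rw [← heq] at hAdj
            rw [hH, compl_adj] at hAdj
            exact hAdj.2 hadj
          · simp only [hc, dif_neg h1, dif_neg h2] at heq
            exact hadj.ne heq
        · have hsub : univ.image c ⊆ univ \ univ.image (fun x : ↥P => f x) := by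
            intro z hz
            obtain ⟨v, _, hv⟩ := Finset.mem_image.mp hz
            rw [Finset.mem_sdiff]
            refine ⟨Finset.mem_univ z, fun hmem => ?_⟩
            obtain ⟨x', _, hx'⟩ := Finset.mem_image.mp hmem
            by_cases h1 : ∃ x : ↥P, f x = v
            · rw [hc] at hv
              simp only [dif_pos h1] at hv
              apply hfQ x'
              rw [hx', ← hv]
              exact (Classical.choose h1).2
            · rw [hc] at hv
              simp only [dif_neg h1] at hv
              exact h1 ⟨x', by rw [hx', ← hv]⟩
          have himgf : (univ.image (fun x : ↥P => f x)).card = P.card := by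
            rw [Finset.card_image_of_injective _ hfinj, Finset.card_univ, Fintype.card_coe]
          calc (univ.image c).card ≤ (univ \ univ.image (fun x : ↥P => f x)).card :=
                Finset.card_le_card hsub
            _ = n - P.card := by
                rw [Finset.card_sdiff_of_subset (Finset.subset_univ _), Finset.card_univ, himgf, hn]
            _ = Q.card := by omega
      have hQclique : G.IsClique (Q : Set V) := by
        intro x hx y hy hxy
        exact hGadj x y hxy (hIQ x (Finset.mem_coe.mp hx) y (Finset.mem_coe.mp hy) hxy)
      have hQK : Q.card ≤ K := by
        calc Q.card ≤ G.cliqueNum := hQclique.card_le_cliqueNum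
          _ ≤ K := le_max_right _ _
      exact hcol.mono hQK
    have hPBiff : ∀ v : V, v ∈ PB ↔ v ∉ PA := by
      intro v
      rw [hPB, Finset.mem_sdiff]
      simp
    have hPAiff : ∀ v : V, v ∈ PA ↔ v ∉ PB := by
      intro v
      rw [hPB, Finset.mem_sdiff]
      simp
    rcases le_total PA.card PB.card with hle | hle
    · exact key PA PB hPBiff hIndA hIndB hle
    · exact key PB PA hPAiff hIndB hIndA hle
  · -- SPARSE CASE
    exact sparse_case G K δ n (le_max_left _ _) (le_max_right _ _) htf hGadj hmindeg hn hdelta1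
      (by omega)
end A2

theorem borodin_kostochka_P3K1_free
    {V : Type*} [Fintype V]
    (G : SimpleGraph V) [DecidableRel G.Adj]
    (hΔ : 9 ≤ G.maxDegree)
    (hfree : ¬ Nonempty (P3UnionK1 ↪g G)) :
    G.chromaticNumber ≤ (↑(max (G.maxDegree - 1) G.cliqueNum) : ℕ∞) := by
  classical
  suffices h : G.Colorable (max (G.maxDegree - 1) G.cliqueNum) by
    exact h.chromaticNumber_le
  by_cases hα : ∃ y x1 x2 : V, y ≠ x1 ∧ y ≠ x2 ∧ x1 ≠ x2 ∧
      ¬G.Adj y x1 ∧ ¬G.Adj y x2 ∧ ¬G.Adj x1 x2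
  · obtain ⟨y, x1, x2, hd1, hd2, hd3, ha1, ha2, ha3⟩ := hα
    exact case_alpha3 G hfree hd1 hd2 hd3 ha1 ha2 ha3
  · refine case_alpha2 G hΔ ?_
    intro y x1 x2 hd1 hd2 hd3 ha1 ha2 ha3
    exact hα ⟨y, x1, x2, hd1, hd2, hd3, ha1, ha2, ha3⟩
end

section
/- Let G be a finite simple graph with maximum degree Δ(G) ≥ 9 that is 3K1-free, i.e., G contains no independent set of size 3 (no induced subgraph isomorphic to three isolated vertices). Then χ(G) ≤ max{Δ(G) − 1, ω(G)}. -/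
set_option linter.unusedSectionVars false
open SimpleGraph Finset

namespace BK

variable {W : Type*} [Fintype W] [DecidableEq W] {H : SimpleGraph W} [DecidableRel H.Adj]

def TFree (H : SimpleGraph W) : Prop := ∀ ⦃u v w : W⦄, H.Adj u v → H.Adj v w → H.Adj u w → False
def Ind (H : SimpleGraph W) (s : Finset W) : Prop := ∀ u ∈ s, ∀ v ∈ s, ¬ H.Adj u v

lemma ind_insert {s : Finset W} {z : W} (hs : Ind H s) (hz : ∀ u ∈ s, ¬ H.Adj z u) :
    Ind H (insert z s) := by
  intro u hu v hv
  rcases mem_insert.1 hu with h1 | h1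
  · rcases mem_insert.1 hv with h2 | h2
    · subst h1; subst h2; exact fun h => H.irrefl h
    · subst h1; exact hz v h2
  · rcases mem_insert.1 hv with h2 | h2
    · subst h2; exact fun h => hz u h1 h.symm
    · exact hs u h1 v h2

lemma ind_nbhd (hT : TFree H) (x : W) : Ind H (H.neighborFinset x) := by
  intro u hu v hv hadj
  rw [mem_neighborFinset] at hu hv
  exact hT hu hadj hv

theorem Kcase (hT : TFree H) (t : ℕ) (h8 : 8 ≤ t)
    (hreg : ∀ v, H.degree v + 1 = t)
    (hn : Fintype.card W = 2 * t + 1)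
    (x z : W) (hzx : z ≠ x) (hzadj : ¬ H.Adj x z)
    (hzA : ∀ y, H.Adj x y → ¬ H.Adj z y) :
    ∃ s : Finset W, Ind H s ∧ Fintype.card W ≤ t + s.card := by
  classical
  obtain ⟨A, hA⟩ : ∃ A, A = H.neighborFinset x := ⟨_, rfl⟩
  obtain ⟨Z, hZ⟩ : ∃ Z, Z = H.neighborFinset z := ⟨_, rfl⟩
  have memA : ∀ v, v ∈ A ↔ H.Adj x v := fun v => by rw [hA]; exact mem_neighborFinset _ _ _
  have memZ : ∀ v, v ∈ Z ↔ H.Adj z v := fun v => by rw [hZ]; exact mem_neighborFinset _ _ _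
  have cardA : A.card + 1 = t := by rw [hA, card_neighborFinset_eq_degree]; exact hreg x
  have cardZ : Z.card + 1 = t := by rw [hZ, card_neighborFinset_eq_degree]; exact hreg z
  have hAZdisj : ∀ v, v ∈ A → v ∈ Z → False := by
    intro v hv hv'; exact hzA v ((memA v).1 hv) ((memZ v).1 hv')
  have hxA : x ∉ A := by rw [memA]; exact fun h => H.irrefl h
  have hxZ : x ∉ Z := by rw [memZ]; exact fun h => hzadj h.symm
  have hzZ : z ∉ Z := by rw [memZ]; exact fun h => H.irrefl h
  have hzA' : z ∉ A := by rw [memA]; exact hzadj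
  -- B = rest, a single vertex c*
  obtain ⟨B, hB⟩ : ∃ B, B = (univ : Finset W) \ (insert x (insert z (A ∪ Z))) := ⟨_, rfl⟩
  have cardIns : (insert x (insert z (A ∪ Z))).card = 2 * t := by
    rw [card_insert_of_notMem (by simp [hxA, hxZ, hzx.symm]),
        card_insert_of_notMem (by simp [hzA', hzZ]),
        card_union_of_disjoint (disjoint_left.2 fun v hv hv' => hAZdisj v hv hv')]
    omega
  have cardB : B.card = 1 := by
    have hsub : (insert x (insert z (A ∪ Z))) ⊆ univ := subset_univ _
    have := card_sdiff_add_card_eq_card hsub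
    rw [← hB] at this
    have hu : (univ : Finset W).card = Fintype.card W := card_univ
    omega
  obtain ⟨c, hc⟩ := card_eq_one.1 cardB
  have hcB : c ∈ B := by rw [hc]; exact mem_singleton_self c
  rw [hB] at hcB
  have hcmem := mem_sdiff.1 hcB
  have hcx : c ≠ x := by
    intro h; apply hcmem.2; subst h; exact mem_insert_self _ _
  have hcz : c ≠ z := by
    intro h; apply hcmem.2; subst h; exact mem_insert_of_mem (mem_insert_self _ _)
  have hcA : c ∉ A := fun h => hcmem.2 (mem_insert_of_mem (mem_insert_of_mem (mem_union_left _ h)))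
  have hcZ : c ∉ Z := fun h => hcmem.2 (mem_insert_of_mem (mem_insert_of_mem (mem_union_right _ h)))
  -- universe decomposition
  have decomp : ∀ v : W, v = x ∨ v = z ∨ v ∈ A ∨ v ∈ Z ∨ v = c := by
    intro v
    by_cases h1 : v = x; · exact Or.inl h1
    by_cases h2 : v = z; · exact Or.inr (Or.inl h2)
    by_cases h3 : v ∈ A; · exact Or.inr (Or.inr (Or.inl h3))
    by_cases h4 : v ∈ Z; · exact Or.inr (Or.inr (Or.inr (Or.inl h4)))
    have : v ∈ B := by
      rw [hB]; rw [mem_sdiff]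
      refine ⟨mem_univ v, ?_⟩
      simp only [mem_insert, mem_union]
      push_neg
      exact ⟨h1, h2, h3, h4⟩
    rw [hc, mem_singleton] at this
    exact Or.inr (Or.inr (Or.inr (Or.inr this)))
  -- N(c) ⊆ A ∪ Z
  have hNc : ∀ v, H.Adj c v → v ∈ A ∨ v ∈ Z := by
    intro v hv
    rcases decomp v with h | h | h | h | h
    · exfalso; apply hcA; rw [memA]; subst h; exact hv.symm
    · exfalso; apply hcZ; rw [memZ]; subst h; exact hv.symm
    · exact Or.inl h
    · exact Or.inr h
    · exfalso; subst h; exact H.irrefl hv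
  have hIndA : Ind H A := by rw [hA]; exact ind_nbhd hT x
  have hIndZ : Ind H Z := by rw [hZ]; exact ind_nbhd hT z
  have hxnZ : ∀ u ∈ Z, ¬ H.Adj x u := fun u hu hadj => hzA u hadj ((memZ u).1 hu)
  have hznA : ∀ u ∈ A, ¬ H.Adj z u := fun u hu hadj => hzA u ((memA u).1 hu) hadj
  -- Ac, Zc
  obtain ⟨Ac, hAc⟩ : ∃ S, S = A ∩ H.neighborFinset c := ⟨_, rfl⟩
  obtain ⟨Zc, hZc⟩ : ∃ S, S = Z ∩ H.neighborFinset c := ⟨_, rfl⟩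
  have memAc : ∀ v, v ∈ Ac ↔ v ∈ A ∧ H.Adj c v := by
    intro v; rw [hAc, mem_inter, mem_neighborFinset]
  have memZc : ∀ v, v ∈ Zc ↔ v ∈ Z ∧ H.Adj c v := by
    intro v; rw [hZc, mem_inter, mem_neighborFinset]
  have hAcsub : Ac ⊆ A := fun v hv => ((memAc v).1 hv).1
  have hZcsub : Zc ⊆ Z := fun v hv => ((memZc v).1 hv).1
  have cardsum : Ac.card + Zc.card + 1 = t := by
    have hNceq : H.neighborFinset c = Ac ∪ Zc := by
      ext v
      rw [mem_neighborFinset, mem_union, memAc, memZc]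
      constructor
      · intro hv
        rcases hNc v hv with h | h
        · exact Or.inl ⟨h, hv⟩
        · exact Or.inr ⟨h, hv⟩
      · rintro (⟨_, h⟩ | ⟨_, h⟩) <;> exact h
    have hdisj : Disjoint Ac Zc := disjoint_left.2 fun v hv hv' =>
      hAZdisj v (hAcsub hv) (hZcsub hv')
    have h1 : (H.neighborFinset c).card = Ac.card + Zc.card := by
      rw [hNceq, card_union_of_disjoint hdisj]
    have h2 := hreg c
    rw [card_neighborFinset_eq_degree] at h1
    omega
  by_cases hAcE : Ac = ∅
  · -- s = insert z (insert c A)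
    have h1 : Ind H (insert c A) := ind_insert hIndA (fun u hu hadj => by
      have : u ∈ Ac := (memAc u).2 ⟨hu, hadj⟩
      simp [hAcE] at this)
    have h2 : Ind H (insert z (insert c A)) := ind_insert h1 (fun u hu hadj => by
      rcases mem_insert.1 hu with h | h
      · exact hcZ ((memZ c).2 (by rw [← h]; exact hadj))
      · exact hznA u h hadj)
    refine ⟨insert z (insert c A), h2, ?_⟩
    have hcard1 : (insert c A).card = A.card + 1 := card_insert_of_notMem hcA
    have hcard2 : (insert z (insert c A)).card = A.card + 2 := by
      rw [card_insert_of_notMem (by simp [hcz.symm, hzA']), hcard1]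
    omega
  · by_cases hZcE : Zc = ∅
    · -- s = insert x (insert c Z)
      have h1 : Ind H (insert c Z) := ind_insert hIndZ (fun u hu hadj => by
        have : u ∈ Zc := (memZc u).2 ⟨hu, hadj⟩
        simp [hZcE] at this)
      have h2 : Ind H (insert x (insert c Z)) := ind_insert h1 (fun u hu hadj => by
        rcases mem_insert.1 hu with h | h
        · exact hcA ((memA c).2 (by rw [← h]; exact hadj))
        · exact hxnZ u h hadj)
      refine ⟨insert x (insert c Z), h2, ?_⟩
      have hcard1 : (insert c Z).card = Z.card + 1 := card_insert_of_notMem hcZ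
      have hcard2 : (insert x (insert c Z)).card = Z.card + 2 := by
        rw [card_insert_of_notMem (by simp [hcx.symm, hxZ]), hcard1]
      omega
    · -- both nonempty : contradiction
      exfalso
      obtain ⟨a', ha'⟩ := nonempty_of_ne_empty hAcE
      obtain ⟨z'', hz''⟩ := nonempty_of_ne_empty hZcE
      have ha'A : a' ∈ A := hAcsub ha'
      have ha'c : H.Adj c a' := ((memAc a').1 ha').2
      have hz''Z : z'' ∈ Z := hZcsub hz''
      have hz''c : H.Adj c z'' := ((memZc z'').1 hz'').2
      -- Claim X : Zc.card ≤ 2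
      have hZc2 : Zc.card ≤ 2 := by
        by_cases hw : ∃ w ∈ Zc, H.Adj a' w
        · obtain ⟨w, hw1, hw2⟩ := hw
          exact absurd ((memZc w).1 hw1).2 (fun h => hT ha'c hw2 h)
        · push_neg at hw
          have hsub : H.neighborFinset a' ⊆ insert x (insert c (Z \ Zc)) := by
            intro v hv
            rw [mem_neighborFinset] at hv
            rcases decomp v with h | h | h | h | h
            · rw [h]; exact mem_insert_self _ _
            · exact absurd (show H.Adj z a' from by rw [← h]; exact hv.symm) (hznA a' ha'A)
            · exact absurd hv (hIndA a' ha'A v h)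
            · refine mem_insert_of_mem (mem_insert_of_mem (mem_sdiff.2 ⟨h, fun hvZc => ?_⟩))
              exact hw v hvZc hv
            · rw [h]; exact mem_insert_of_mem (mem_insert_self _ _)
          have hc1 := card_le_card hsub
          have hc2 := card_insert_le x (insert c (Z \ Zc))
          have hc3 := card_insert_le c (Z \ Zc)
          have hc4 : (Z \ Zc).card = Z.card - Zc.card := card_sdiff_of_subset hZcsub
          have hc5 : Zc.card ≤ Z.card := card_le_card hZcsub
          have hc6 := hreg a'
          rw [card_neighborFinset_eq_degree] at hc1
          omega
      have hAc3 : t ≤ Ac.card + 3 := by omega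
      -- Claim Y : contradiction via z''
      by_cases hw : ∃ w ∈ Ac, H.Adj z'' w
      · obtain ⟨w, hw1, hw2⟩ := hw
        exact hT hz''c hw2 ((memAc w).1 hw1).2
      · push_neg at hw
        have hsub : H.neighborFinset z'' ⊆ insert z (insert c (A \ Ac)) := by
          intro v hv
          rw [mem_neighborFinset] at hv
          rcases decomp v with h | h | h | h | h
          · exact absurd (show H.Adj x z'' from by rw [← h]; exact hv.symm) (hxnZ z'' hz''Z)
          · rw [h]; exact mem_insert_self _ _
          · refine mem_insert_of_mem (mem_insert_of_mem (mem_sdiff.2 ⟨h, fun hvAc => ?_⟩))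
            exact hw v hvAc hv
          · exact absurd hv (hIndZ z'' hz''Z v h)
          · rw [h]; exact mem_insert_of_mem (mem_insert_self _ _)
        have hc1 := card_le_card hsub
        have hc2 := card_insert_le z (insert c (A \ Ac))
        have hc3 := card_insert_le c (A \ Ac)
        have hc4 : (A \ Ac).card = A.card - Ac.card := card_sdiff_of_subset hAcsub
        have hc5 : Ac.card ≤ A.card := card_le_card hAcsub
        have hc6 := hreg z''
        rw [card_neighborFinset_eq_degree] at hc1
        omega

theorem direct (hT : TFree H) (t : ℕ) (h8 : 8 ≤ t)
    (hdeg : ∀ v, t ≤ H.degree v + 1)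
    (hn : Fintype.card W ≤ 2 * t + 1) :
    ∃ s : Finset W, Ind H s ∧ Fintype.card W ≤ t + s.card := by
  classical
  by_cases hbig : ∃ v, Fintype.card W ≤ H.degree v + t
  · obtain ⟨v, hv⟩ := hbig
    refine ⟨H.neighborFinset v, ind_nbhd hT v, ?_⟩
    rw [card_neighborFinset_eq_degree]; omega
  push_neg at hbig
  rcases isEmpty_or_nonempty W with hW | hW
  · refine ⟨∅, ?_, ?_⟩
    · intro u hu; simp at hu
    · simp [Fintype.card_eq_zero]
  obtain ⟨x, -, hxmax⟩ := Finset.exists_max_image (univ : Finset W) (fun v => H.degree v) univ_nonempty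
  obtain ⟨A, hA⟩ : ∃ A, A = H.neighborFinset x := ⟨_, rfl⟩
  have memA : ∀ v, v ∈ A ↔ H.Adj x v := fun v => by rw [hA]; exact mem_neighborFinset _ _ _
  have cardA : A.card = H.degree x := by rw [hA, card_neighborFinset_eq_degree]
  have hxA : x ∉ A := fun h => H.irrefl ((memA x).1 h)
  have hIndA : Ind H A := by rw [hA]; exact ind_nbhd hT x
  obtain ⟨C, hC⟩ : ∃ C, C = univ \ insert x A := ⟨_, rfl⟩
  have memC : ∀ v, v ∈ C ↔ (v ≠ x ∧ v ∉ A) := by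
    intro v; rw [hC]; simp only [mem_sdiff, mem_univ, mem_insert, true_and]; tauto
  have cardC : C.card + (A.card + 1) = Fintype.card W := by
    have h1 := card_sdiff_add_card_eq_card (subset_univ (insert x A))
    rw [← hC, card_insert_of_notMem hxA, card_univ] at h1
    omega
  have decomp : ∀ v : W, v = x ∨ v ∈ A ∨ v ∈ C := by
    intro v
    by_cases h1 : v = x; · exact Or.inl h1
    by_cases h2 : v ∈ A; · exact Or.inr (Or.inl h2)
    exact Or.inr (Or.inr ((memC v).2 ⟨h1, h2⟩))
  have hCnadj : ∀ z ∈ C, ¬ H.Adj x z := fun z hz h => ((memC z).1 hz).2 ((memA z).2 h)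
  by_cases hz : ∃ z ∈ C, ∀ y ∈ A, ¬ H.Adj z y
  · obtain ⟨z, hzC, hzy⟩ := hz
    by_cases hta : t ≤ H.degree x
    · refine ⟨insert z A, ind_insert hIndA hzy, ?_⟩
      rw [card_insert_of_notMem (fun h => ((memC z).1 hzC).2 h)]
      omega
    · by_cases hle : Fintype.card W ≤ 2 * t
      · refine ⟨insert z A, ind_insert hIndA hzy, ?_⟩
        rw [card_insert_of_notMem (fun h => ((memC z).1 hzC).2 h)]
        have := hdeg x
        omega
      · have hn' : Fintype.card W = 2 * t + 1 := by omega
        have hreg : ∀ v, H.degree v + 1 = t := fun v =>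
          le_antisymm (by have := hxmax v (mem_univ v); omega) (hdeg v)
        exact Kcase hT t h8 hreg hn' x z ((memC z).1 hzC).1 (hCnadj z hzC)
          (fun y hy => hzy y ((memA y).2 hy))
  · push_neg at hz
    have key : ∀ z' ∈ C, ∃ (Az Cz : Finset W), Az ⊆ A ∧
        (∀ v, v ∈ Az ↔ v ∈ A ∧ H.Adj z' v) ∧
        H.degree z' = Az.card + Cz.card ∧ Cz.card + t ≤ C.card + 2 := by
      intro z' hz'C
      obtain ⟨y, hyA, hyadj⟩ := hz z' hz'C
      refine ⟨A ∩ H.neighborFinset z', C ∩ H.neighborFinset z', inter_subset_left,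
        fun v => by rw [mem_inter, mem_neighborFinset], ?_, ?_⟩
      · have hNeq : H.neighborFinset z' = (A ∩ H.neighborFinset z') ∪ (C ∩ H.neighborFinset z') := by
          ext v
          simp only [mem_union, mem_inter, mem_neighborFinset]
          constructor
          · intro hv
            rcases decomp v with h | h | h
            · exact absurd (show H.Adj x z' from by rw [← h]; exact hv.symm) (hCnadj z' hz'C)
            · exact Or.inl ⟨h, hv⟩
            · exact Or.inr ⟨h, hv⟩
          · rintro (⟨_, h⟩ | ⟨_, h⟩) <;> exact h
        have hdisj : Disjoint (A ∩ H.neighborFinset z') (C ∩ H.neighborFinset z') :=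
          disjoint_left.2 fun v h1 h2 => ((memC v).1 (mem_inter.1 h2).1).2 (mem_inter.1 h1).1
        have h1 := card_union_of_disjoint hdisj
        rw [← hNeq, card_neighborFinset_eq_degree] at h1
        exact h1
      · have hsub : H.neighborFinset y ⊆ insert x (C \ (C ∩ H.neighborFinset z')) := by
          intro v hv
          rw [mem_neighborFinset] at hv
          rcases decomp v with h | h | h
          · rw [h]; exact mem_insert_self _ _
          · exact absurd hv (hIndA y hyA v h)
          · refine mem_insert_of_mem (mem_sdiff.2 ⟨h, fun hvCz => ?_⟩)
            exact hT hyadj hv (mem_neighborFinset .. |>.1 (mem_inter.1 hvCz).2)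
        have hc1 := card_le_card hsub
        have hc2 := card_insert_le x (C \ (C ∩ H.neighborFinset z'))
        have hc3 : (C \ (C ∩ H.neighborFinset z')).card = C.card - (C ∩ H.neighborFinset z').card :=
          card_sdiff_of_subset inter_subset_left
        have hc4 : (C ∩ H.neighborFinset z').card ≤ C.card := card_le_card inter_subset_left
        have hc5 := hdeg y
        rw [card_neighborFinset_eq_degree] at hc1
        omega
    have hCind : Ind H C := by
      intro z1 hz1 z2 hz2 hadj
      obtain ⟨Az1, Cz1, hsub1, hmem1, hdeg1, hbd1⟩ := key z1 hz1
      obtain ⟨Az2, Cz2, hsub2, hmem2, hdeg2, hbd2⟩ := key z2 hz2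
      have hdisj : Disjoint Az1 Az2 := disjoint_left.2 fun v h1 h2 =>
        hT hadj ((hmem2 v).1 h2).2 ((hmem1 v).1 h1).2
      have hcup : Az1.card + Az2.card ≤ A.card := by
        rw [← card_union_of_disjoint hdisj]
        exact card_le_card (union_subset hsub1 hsub2)
      have ht1 := hdeg z1
      have ht2 := hdeg z2
      have hbx := hbig x
      have ht3 := hdeg x
      omega
    have hxC : x ∉ C := fun h => ((memC x).1 h).1 rfl
    refine ⟨insert x C, ind_insert hCind (fun u hu => hCnadj u hu), ?_⟩
    rw [card_insert_of_notMem hxC]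
    have hbx := hbig x
    omega

/-- matching: finset of ordered pairs of adjacent vertices, pairwise disjoint supports -/
def IsM (H : SimpleGraph W) (P : Finset (W × W)) : Prop :=
  (∀ p ∈ P, H.Adj p.1 p.2) ∧
  (∀ p ∈ P, ∀ q ∈ P, p ≠ q → p.1 ≠ q.1 ∧ p.1 ≠ q.2 ∧ p.2 ≠ q.1 ∧ p.2 ≠ q.2)

def Mv (P : Finset (W × W)) : Finset W := P.biUnion fun p => {p.1, p.2}

lemma mem_Mv {P : Finset (W × W)} {v : W} : v ∈ Mv P ↔ ∃ p ∈ P, v = p.1 ∨ v = p.2 := by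
  simp only [Mv, mem_biUnion, mem_insert, mem_singleton]

lemma card_Mv {P : Finset (W × W)} (hP : IsM H P) : (Mv P).card = 2 * P.card := by
  rw [Mv, card_biUnion]
  · rw [Finset.sum_congr rfl (fun p hp => show ({p.1, p.2} : Finset W).card = 2 by
      rw [card_insert_of_notMem (by simp [(hP.1 p hp).ne]), card_singleton])]
    rw [Finset.sum_const, smul_eq_mul, mul_comm]
  · intro p hp q hq hne
    have h := hP.2 p hp q hq hne
    simp only [Finset.disjoint_left, mem_insert, mem_singleton]
    rintro v (rfl | rfl) (h' | h')
    · exact h.1 h'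
    · exact h.2.1 h'
    · exact h.2.2.1 h'
    · exact h.2.2.2 h'

lemma exists_max_matching (H : SimpleGraph W) [DecidableRel H.Adj] :
    ∃ P, IsM H P ∧ ∀ Q, IsM H Q → Q.card ≤ P.card := by
  classical
  obtain ⟨P, hPmem, hmax⟩ := Finset.exists_max_image
    ((univ : Finset (Finset (W × W))).filter (fun P => IsM H P)) (fun P => P.card)
    ⟨∅, mem_filter.2 ⟨mem_univ _, ⟨fun p hp => absurd hp (notMem_empty p),
      fun p hp => absurd hp (notMem_empty p)⟩⟩⟩
  exact ⟨P, (mem_filter.1 hPmem).2, fun Q hQ => hmax Q (mem_filter.2 ⟨mem_univ _, hQ⟩)⟩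

lemma swap_lemma {P R Q : Finset (W × W)} (hP : IsM H P)
    (hmax : ∀ Q', IsM H Q' → Q'.card ≤ P.card)
    (hR : R ⊆ P) (hQ : IsM H Q)
    (hsup : ∀ v ∈ Mv Q, v ∈ Mv R ∨ v ∉ Mv P)
    (hcard : R.card < Q.card) : False := by
  classical
  have key : ∀ q ∈ Q, ∀ p ∈ P, p ∉ R →
      p.1 ≠ q.1 ∧ p.1 ≠ q.2 ∧ p.2 ≠ q.1 ∧ p.2 ≠ q.2 := by
    intro q hq p hp hpR
    have hv : ∀ v, (v = q.1 ∨ v = q.2) → (v = p.1 ∨ v = p.2) → False := by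
      intro v hvq hvp
      have hvQ : v ∈ Mv Q := mem_Mv.2 ⟨q, hq, hvq⟩
      rcases hsup v hvQ with h | h
      · obtain ⟨r, hrR, hvr⟩ := mem_Mv.1 h
        have hpr : p ≠ r := fun he => hpR (he ▸ hrR)
        have hd := hP.2 p hp r (hR hrR) hpr
        rcases hvp with h1 | h1 <;> rcases hvr with h2 | h2
        · exact hd.1 (by rw [← h1]; exact h2)
        · exact hd.2.1 (by rw [← h1]; exact h2)
        · exact hd.2.2.1 (by rw [← h1]; exact h2)
        · exact hd.2.2.2 (by rw [← h1]; exact h2)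
      · exact h (mem_Mv.2 ⟨p, hp, hvp⟩)
    exact ⟨fun h => hv p.1 (Or.inl h) (Or.inl rfl), fun h => hv p.1 (Or.inr h) (Or.inl rfl),
      fun h => hv p.2 (Or.inl h) (Or.inr rfl), fun h => hv p.2 (Or.inr h) (Or.inr rfl)⟩
  have hdisjQP : Disjoint Q (P \ R) := by
    rw [Finset.disjoint_left]
    intro q hq hqP
    exact (key q hq q (mem_sdiff.1 hqP).1 (mem_sdiff.1 hqP).2).1 rfl
  have hM : IsM H ((P \ R) ∪ Q) := by
    constructor
    · intro p hp
      rcases mem_union.1 hp with h | h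
      · exact hP.1 p (sdiff_subset h)
      · exact hQ.1 p h
    · intro p hp q hq hne
      rcases mem_union.1 hp with hp' | hp' <;> rcases mem_union.1 hq with hq' | hq'
      · exact hP.2 p (sdiff_subset hp') q (sdiff_subset hq') hne
      · exact key q hq' p (mem_sdiff.1 hp').1 (mem_sdiff.1 hp').2
      · have h := key p hp' q (mem_sdiff.1 hq').1 (mem_sdiff.1 hq').2
        exact ⟨fun h' => h.1 h'.symm, fun h' => h.2.2.1 h'.symm,
          fun h' => h.2.1 h'.symm, fun h' => h.2.2.2 h'.symm⟩
      · exact hQ.2 p hp' q hq' hne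
  have hcard1 : ((P \ R) ∪ Q).card = (P \ R).card + Q.card :=
    card_union_of_disjoint hdisjQP.symm
  have hcard2 : (P \ R).card = P.card - R.card := card_sdiff_of_subset hR
  have hle := hmax _ hM
  have hRP := card_le_card hR
  omega

lemma Mv_single {p : W × W} : Mv ({p} : Finset (W × W)) = {p.1, p.2} := by
  ext v; simp [mem_Mv, mem_insert, mem_singleton]

lemma isM_single {u v : W} (h : H.Adj u v) :
    IsM H {(u, v)} ∧ ({(u, v)} : Finset (W × W)).card = 1 ∧
      Mv ({(u, v)} : Finset (W × W)) = {u, v} := by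
  refine ⟨⟨?_, ?_⟩, card_singleton _, Mv_single⟩
  · intro p hp; rw [mem_singleton] at hp; subst hp; exact h
  · intro p hp q hq hne
    rw [mem_singleton] at hp hq
    exact absurd (hp.trans hq.symm) hne

lemma isM_insert {Q : Finset (W × W)} {u v : W} (hQ : IsM H Q) (h : H.Adj u v)
    (hu : ∀ w ∈ Mv Q, u ≠ w ∧ v ≠ w) :
    IsM H (insert (u, v) Q) ∧ (insert (u, v) Q).card = Q.card + 1 ∧
      Mv (insert (u, v) Q) = insert u (insert v (Mv Q)) := by
  have hnotmem : (u, v) ∉ Q := fun hmem =>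
    (hu u (mem_Mv.2 ⟨(u, v), hmem, Or.inl rfl⟩)).1 rfl
  refine ⟨⟨?_, ?_⟩, card_insert_of_notMem hnotmem, ?_⟩
  · intro p hp
    rcases mem_insert.1 hp with h' | h'
    · rw [h']; exact h
    · exact hQ.1 p h'
  · intro p hp q hq hne
    rcases mem_insert.1 hp with h1 | h1 <;> rcases mem_insert.1 hq with h2 | h2
    · exact absurd (h1.trans h2.symm) hne
    · subst h1
      have k1 := hu q.1 (mem_Mv.2 ⟨q, h2, Or.inl rfl⟩)
      have k2 := hu q.2 (mem_Mv.2 ⟨q, h2, Or.inr rfl⟩)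
      exact ⟨k1.1, k2.1, k1.2, k2.2⟩
    · subst h2
      have k1 := hu p.1 (mem_Mv.2 ⟨p, h1, Or.inl rfl⟩)
      have k2 := hu p.2 (mem_Mv.2 ⟨p, h1, Or.inr rfl⟩)
      exact ⟨k1.1.symm, k1.2.symm, k2.1.symm, k2.2.symm⟩
    · exact hQ.2 p h1 q h2 hne
  · ext w
    simp only [mem_Mv, mem_insert]
    constructor
    · rintro ⟨p, hp, hw⟩
      rcases hp with h' | h'
      · subst h'; rcases hw with h | h
        · exact Or.inl h
        · exact Or.inr (Or.inl h)
      · exact Or.inr (Or.inr ⟨p, h', hw⟩)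
    · rintro (h | h | h)
      · exact ⟨(u, v), Or.inl rfl, Or.inl h⟩
      · exact ⟨(u, v), Or.inl rfl, Or.inr h⟩
      · obtain ⟨p, hp, hw⟩ := h
        exact ⟨p, Or.inr hp, hw⟩

lemma not_mem_Mv {P : Finset (W × W)} {v : W} (hv : v ∉ Mv P) :
    ∀ e ∈ P, v ≠ e.1 ∧ v ≠ e.2 := fun e he =>
  ⟨fun h => hv (mem_Mv.2 ⟨e, he, Or.inl h⟩), fun h => hv (mem_Mv.2 ⟨e, he, Or.inr h⟩)⟩

lemma mem_Mv_of_mem {P : Finset (W × W)} {e : W × W} (he : e ∈ P) :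
    e.1 ∈ Mv P ∧ e.2 ∈ Mv P :=
  ⟨mem_Mv.2 ⟨e, he, Or.inl rfl⟩, mem_Mv.2 ⟨e, he, Or.inr rfl⟩⟩

/-- orient a maximum matching so that `a`'s neighbours are all first components -/
lemma orient (hT : TFree H) {P : Finset (W × W)} (hP : IsM H P) (a : W) (ha : a ∉ Mv P) :
    ∃ P', IsM H P' ∧ P'.card = P.card ∧ Mv P' = Mv P ∧ ∀ e ∈ P', ¬ H.Adj a e.2 := by
  classical
  refine ⟨P.image (fun p => if H.Adj a p.2 then (p.2, p.1) else p), ?_⟩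
  set f : W × W → W × W := fun p => if H.Adj a p.2 then (p.2, p.1) else p with hf
  have hcomp : ∀ p : W × W, ((f p).1 = p.1 ∧ (f p).2 = p.2) ∨ ((f p).1 = p.2 ∧ (f p).2 = p.1) := by
    intro p
    by_cases h : H.Adj a p.2
    · right; rw [hf]; simp [h]
    · left; rw [hf]; simp [h]
  have hdiff : ∀ p ∈ P, ∀ q ∈ P, p ≠ q →
      (f p).1 ≠ (f q).1 ∧ (f p).1 ≠ (f q).2 ∧ (f p).2 ≠ (f q).1 ∧ (f p).2 ≠ (f q).2 := by
    intro p hp q hq hne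
    have hd := hP.2 p hp q hq hne
    rcases hcomp p with ⟨h1, h2⟩ | ⟨h1, h2⟩ <;> rcases hcomp q with ⟨h3, h4⟩ | ⟨h3, h4⟩ <;>
      rw [h1, h2, h3, h4] <;> tauto
  have hinj : Set.InjOn f ↑P := by
    intro p hp q hq hfeq
    by_contra hne
    exact (hdiff p hp q hq hne).1 (by rw [hfeq])
  constructor
  · constructor
    · intro p hp
      obtain ⟨q, hq, rfl⟩ := mem_image.1 hp
      rcases hcomp q with ⟨h1, h2⟩ | ⟨h1, h2⟩ <;> rw [h1, h2]
      · exact hP.1 q hq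
      · exact (hP.1 q hq).symm
    · intro p hp q hq hne
      obtain ⟨p', hp', rfl⟩ := mem_image.1 hp
      obtain ⟨q', hq', rfl⟩ := mem_image.1 hq
      exact hdiff p' hp' q' hq' (fun h => hne (by rw [h]))
  refine ⟨card_image_of_injOn hinj, ?_, ?_⟩
  · ext v
    simp only [mem_Mv, mem_image]
    constructor
    · rintro ⟨p, ⟨q, hq, rfl⟩, hv⟩
      rcases hcomp q with ⟨h1, h2⟩ | ⟨h1, h2⟩ <;> rw [h1, h2] at hv
      · exact ⟨q, hq, hv⟩
      · exact ⟨q, hq, hv.symm⟩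
    · rintro ⟨q, hq, hv⟩
      refine ⟨f q, ⟨q, hq, rfl⟩, ?_⟩
      rcases hcomp q with ⟨h1, h2⟩ | ⟨h1, h2⟩ <;> rw [h1, h2]
      · exact hv
      · exact hv.symm
  · rintro e he
    obtain ⟨q, hq, rfl⟩ := mem_image.1 he
    by_cases h : H.Adj a q.2
    · have hfq : f q = (q.2, q.1) := by rw [hf]; simp [h]
      rw [hfq]
      intro h'
      exact hT h' (hP.1 q hq) h
    · have hfq : f q = q := by rw [hf]; simp [h]
      rw [hfq]
      exact h

theorem caseU2 (hT : TFree H) {P : Finset (W × W)} (hP : IsM H P)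
    (hmax : ∀ Q, IsM H Q → Q.card ≤ P.card)
    (δ : ℕ) (hdeg : ∀ v, δ ≤ H.degree v)
    (ht : P.card ≤ δ + 1)
    {a b : W} (ha : a ∉ Mv P) (hb : b ∉ Mv P) (hab : a ≠ b)
    (hor : ∀ e ∈ P, ¬ H.Adj a e.2) :
    ∃ s : Finset W, Ind H s ∧ Fintype.card W ≤ P.card + s.card := by
  classical
  have uind : ∀ u v : W, u ∉ Mv P → v ∉ Mv P → ¬ H.Adj u v := by
    intro u v hu hv hadj
    obtain ⟨hQ, hQcard, hQv⟩ := isM_single hadj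
    refine swap_lemma hP hmax (empty_subset P) hQ ?_ (by rw [hQcard]; simp)
    intro w hw
    rw [hQv] at hw
    rcases mem_insert.1 hw with rfl | hw
    · exact Or.inr hu
    · rw [mem_singleton] at hw; subst hw; exact Or.inr hv
  have hnbr : ∀ u : W, u ∉ Mv P → ∀ w : W, H.Adj u w → w ∈ Mv P := by
    intro u hu w hadj; by_contra hw; exact uind u w hu hw hadj
  have hcount : ∀ u : W, u ∉ Mv P →
      H.degree u ≤ (P.filter (fun e => H.Adj u e.1 ∨ H.Adj u e.2)).card := by
    intro u hu
    rw [← card_neighborFinset_eq_degree]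
    have hex : ∀ w, H.Adj u w → ∃ e, e ∈ P ∧ (w = e.1 ∨ w = e.2) := by
      intro w hw
      exact mem_Mv.1 (hnbr u hu w hw)
    refine card_le_card_of_injOn
      (fun w => if h : ∃ e, e ∈ P ∧ (w = e.1 ∨ w = e.2) then h.choose else (w, w)) ?_ ?_
    · intro w hw
      rw [Finset.mem_coe, mem_neighborFinset] at hw
      dsimp only
      rw [dif_pos (hex w hw)]
      obtain ⟨he, hwor⟩ := (hex w hw).choose_spec
      refine mem_filter.2 ⟨he, ?_⟩
      rcases hwor with h | h
      · exact Or.inl (h ▸ hw)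
      · exact Or.inr (h ▸ hw)
    · intro w1 hw1 w2 hw2 heq
      rw [Finset.mem_coe, mem_neighborFinset] at hw1 hw2
      by_contra hne
      dsimp only at heq
      rw [dif_pos (hex w1 hw1), dif_pos (hex w2 hw2)] at heq
      obtain ⟨he1, hor1⟩ := (hex w1 hw1).choose_spec
      obtain ⟨he2, hor2⟩ := (hex w2 hw2).choose_spec
      rw [heq] at hor1
      have hadj12 : H.Adj w1 w2 := by
        rcases hor1 with h1 | h1 <;> rcases hor2 with h2 | h2
        · exact absurd (h1.trans h2.symm) hne
        · have hA := hP.1 _ he2; rw [← h1, ← h2] at hA; exact hA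
        · have hA := (hP.1 _ he2).symm; rw [← h1, ← h2] at hA; exact hA
        · exact absurd (h1.trans h2.symm) hne
      exact hT hw1 hadj12 hw2
  obtain ⟨D, hD⟩ : ∃ D, D = P.filter (fun e => H.Adj a e.1) := ⟨_, rfl⟩
  have memD : ∀ e, e ∈ D ↔ e ∈ P ∧ H.Adj a e.1 := by intro e; rw [hD, mem_filter]
  have hDsub : D ⊆ P := fun e he => ((memD e).1 he).1
  have hDcard : δ ≤ D.card := by
    have h1 := hcount a ha
    have h2 : P.filter (fun e => H.Adj a e.1 ∨ H.Adj a e.2) ⊆ D := by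
      intro e he
      rw [mem_filter] at he
      rcases he.2 with h | h
      · exact (memD e).2 ⟨he.1, h⟩
      · exact absurd h (hor e he.1)
    have h3 := card_le_card h2
    have h4 := hdeg a
    omega
  have hPD1 : ∀ e ∈ P, ∀ f ∈ P, e ∉ D → f ∉ D → e = f := by
    intro e he f hf heD hfD
    by_contra hne
    have hsub2 : ({e, f} : Finset (W × W)) ⊆ P \ D := by
      intro g hg
      rcases mem_insert.1 hg with rfl | hg
      · exact mem_sdiff.2 ⟨he, heD⟩
      · rw [mem_singleton] at hg; subst hg; exact mem_sdiff.2 ⟨hf, hfD⟩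
    have h1 : ({e, f} : Finset (W × W)).card = 2 := by
      rw [card_insert_of_notMem (by rw [mem_singleton]; exact hne), card_singleton]
    have h2 := card_le_card hsub2
    have h3 : (P \ D).card = P.card - D.card := card_sdiff_of_subset hDsub
    have h4 := card_le_card hDsub
    omega
  -- F2 : second endpoints of D-edges have no unmatched neighbours
  have hwnotU : ∀ e ∈ D, ∀ u, u ∉ Mv P → ¬ H.Adj e.2 u := by
    intro e he u hu hadj
    obtain ⟨heP, hea⟩ := (memD e).1 he
    have hua : u ≠ a := by rintro rfl; exact hor e heP hadj.symm
    obtain ⟨hQ1, hc1, hv1⟩ := isM_single hea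
    obtain ⟨hQ2, hc2, hv2⟩ := isM_insert hQ1 hadj (by
      intro w hw
      rw [hv1] at hw
      rcases mem_insert.1 hw with rfl | hw
      · exact ⟨((not_mem_Mv ha e heP).2).symm.symm.symm, hua⟩
      · rw [mem_singleton] at hw; subst hw
        exact ⟨(hP.1 e heP).ne', (not_mem_Mv hu e heP).1⟩)
    refine swap_lemma hP hmax (singleton_subset_iff.2 heP) hQ2 ?_ (by rw [hc2, hc1]; simp)
    intro w hw
    rw [hv2, hv1] at hw
    have he1R : e.1 ∈ Mv ({e} : Finset (W × W)) := (mem_Mv_of_mem (mem_singleton_self e)).1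
    have he2R : e.2 ∈ Mv ({e} : Finset (W × W)) := (mem_Mv_of_mem (mem_singleton_self e)).2
    rcases mem_insert.1 hw with rfl | hw
    · exact Or.inl he2R
    rcases mem_insert.1 hw with rfl | hw
    · exact Or.inr hu
    rcases mem_insert.1 hw with rfl | hw
    · exact Or.inr ha
    · rw [mem_singleton] at hw; subst hw; exact Or.inl he1R
  -- b misses at most one edge of D
  have hbmiss : ∀ e ∈ D, ∀ f ∈ D, e ≠ f → H.Adj b e.1 ∨ H.Adj b f.1 := by
    intro e he f hf hne
    by_contra hcon
    push_neg at hcon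
    have hsubf : P.filter (fun g => H.Adj b g.1 ∨ H.Adj b g.2) ⊆ P \ {e, f} := by
      intro g hg
      rw [mem_filter] at hg
      rw [mem_sdiff]
      refine ⟨hg.1, fun hmem => ?_⟩
      rcases mem_insert.1 hmem with rfl | hmem
      · rcases hg.2 with h | h
        · exact hcon.1 h
        · exact hwnotU g he b hb h.symm
      · rw [mem_singleton] at hmem; subst hmem
        rcases hg.2 with h | h
        · exact hcon.2 h
        · exact hwnotU g hf b hb h.symm
    have h1 := hcount b hb
    have h2 := card_le_card hsubf
    have h3 : ({e, f} : Finset (W × W)).card = 2 := by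
      rw [card_insert_of_notMem (by rw [mem_singleton]; exact hne), card_singleton]
    have hefP : ({e, f} : Finset (W × W)) ⊆ P := by
      intro g hg
      rcases mem_insert.1 hg with rfl | hg
      · exact hDsub he
      · rw [mem_singleton] at hg; subst hg; exact hDsub hf
    have h4 : (P \ ({e, f} : Finset (W × W))).card = P.card - 2 := by
      rw [card_sdiff_of_subset hefP, h3]
    have h5 := hdeg b
    have h6 := card_le_card hefP
    omega
  -- F4' : second endpoints of two D-edges are nonadjacent (asymmetric version)
  have F4' : ∀ e ∈ D, ∀ f ∈ D, e ≠ f → H.Adj e.2 f.2 → H.Adj b e.1 → False := by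
    intro e he f hf hne hadj hbe
    obtain ⟨heP, hea⟩ := (memD e).1 he
    obtain ⟨hfP, hfa⟩ := (memD f).1 hf
    have hd := hP.2 e heP f hfP hne
    obtain ⟨hQ0, hc0, hv0⟩ := isM_single hfa
    obtain ⟨hQ1, hc1, hv1⟩ := isM_insert hQ0 hbe (by
      intro w hw
      rw [hv0] at hw
      rcases mem_insert.1 hw with rfl | hw
      · exact ⟨hab.symm, (not_mem_Mv ha e heP).1.symm⟩
      · rw [mem_singleton] at hw; subst hw
        exact ⟨(not_mem_Mv hb f hfP).1, hd.1⟩)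
    obtain ⟨hQ2, hc2, hv2⟩ := isM_insert hQ1 hadj (by
      intro w hw
      rw [hv1, hv0] at hw
      rcases mem_insert.1 hw with rfl | hw
      · exact ⟨(not_mem_Mv hb e heP).2.symm, (not_mem_Mv hb f hfP).2.symm⟩
      rcases mem_insert.1 hw with rfl | hw
      · exact ⟨(hP.1 e heP).ne', hd.2.1.symm⟩
      rcases mem_insert.1 hw with rfl | hw
      · exact ⟨(not_mem_Mv ha e heP).2.symm, (not_mem_Mv ha f hfP).2.symm⟩
      · rw [mem_singleton] at hw; subst hw
        exact ⟨hd.2.2.1, (hP.1 f hfP).ne'⟩)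
    have hRsub : ({e, f} : Finset (W × W)) ⊆ P := by
      intro g hg
      rcases mem_insert.1 hg with rfl | hg
      · exact heP
      · rw [mem_singleton] at hg; subst hg; exact hfP
    have heR : e ∈ ({e, f} : Finset (W × W)) := mem_insert_self _ _
    have hfR : f ∈ ({e, f} : Finset (W × W)) := mem_insert_of_mem (mem_singleton_self f)
    refine swap_lemma hP hmax hRsub hQ2 ?_ ?_
    · intro w hw
      rw [hv2, hv1, hv0] at hw
      rcases mem_insert.1 hw with rfl | hw
      · exact Or.inl (mem_Mv_of_mem heR).2
      rcases mem_insert.1 hw with rfl | hw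
      · exact Or.inl (mem_Mv_of_mem hfR).2
      rcases mem_insert.1 hw with rfl | hw
      · exact Or.inr hb
      rcases mem_insert.1 hw with rfl | hw
      · exact Or.inl (mem_Mv_of_mem heR).1
      rcases mem_insert.1 hw with rfl | hw
      · exact Or.inr ha
      · rw [mem_singleton] at hw; subst hw
        exact Or.inl (mem_Mv_of_mem hfR).1
    · have hle : ({e, f} : Finset (W × W)).card ≤ 2 :=
        (card_insert_le _ _).trans (by rw [card_singleton])
      omega
  have F4 : ∀ e ∈ D, ∀ f ∈ D, H.Adj e.2 f.2 → False := by
    intro e he f hf hadj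
    have hne : e ≠ f := by rintro rfl; exact H.irrefl hadj
    rcases hbmiss e he f hf hne with h | h
    · exact F4' e he f hf hne hadj h
    · exact F4' f hf e he hne.symm hadj.symm h
  -- F5 family : e ∈ P \ D
  have F5i : ∀ e ∈ P, e ∉ D → ∀ u1 u2 : W, u1 ∉ Mv P → u2 ∉ Mv P →
      H.Adj e.1 u1 → H.Adj e.2 u2 → False := by
    intro e heP heD u1 u2 hu1 hu2 h1 h2
    by_cases h12 : u1 = u2
    · subst h12
      exact hT h1.symm (hP.1 e heP) h2.symm
    · obtain ⟨hQ0, hc0, hv0⟩ := isM_single h1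
      obtain ⟨hQ1, hc1, hv1⟩ := isM_insert hQ0 h2 (by
        intro w hw
        rw [hv0] at hw
        rcases mem_insert.1 hw with rfl | hw
        · exact ⟨(hP.1 e heP).ne', (not_mem_Mv hu2 e heP).1⟩
        · rw [mem_singleton] at hw; subst hw
          exact ⟨(not_mem_Mv hu1 e heP).2.symm, fun h => h12 h.symm⟩)
      refine swap_lemma hP hmax (singleton_subset_iff.2 heP) hQ1 ?_ ?_
      · intro w hw
        rw [hv1, hv0] at hw
        have heR := mem_Mv_of_mem (mem_singleton_self e)
        rcases mem_insert.1 hw with rfl | hw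
        · exact Or.inl heR.2
        rcases mem_insert.1 hw with rfl | hw
        · exact Or.inr hu2
        rcases mem_insert.1 hw with rfl | hw
        · exact Or.inl heR.1
        · rw [mem_singleton] at hw; subst hw; exact Or.inr hu1
      · rw [card_singleton]; omega
  have F5ii : ∀ e ∈ P, e ∉ D → ∀ f ∈ D, ∀ u : W, u ∉ Mv P →
      H.Adj e.1 u → H.Adj e.2 f.2 → False := by
    intro e heP heD f hf u hu h1 h2
    obtain ⟨hfP, hfa⟩ := (memD f).1 hf
    have hef : e ≠ f := by rintro rfl; exact heD hf
    have hd := hP.2 e heP f hfP hef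
    have hua : u ≠ a := by
      rintro rfl
      exact (fun h => heD ((memD e).2 ⟨heP, h⟩)) h1.symm
    obtain ⟨hQ0, hc0, hv0⟩ := isM_single hfa
    obtain ⟨hQ1, hc1, hv1⟩ := isM_insert hQ0 h1 (by
      intro w hw
      rw [hv0] at hw
      rcases mem_insert.1 hw with rfl | hw
      · exact ⟨(not_mem_Mv ha e heP).1.symm, hua⟩
      · rw [mem_singleton] at hw; subst hw
        exact ⟨hd.1, (not_mem_Mv hu f hfP).1⟩)
    obtain ⟨hQ2, hc2, hv2⟩ := isM_insert hQ1 h2 (by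
      intro w hw
      rw [hv1, hv0] at hw
      rcases mem_insert.1 hw with rfl | hw
      · exact ⟨(hP.1 e heP).ne', hd.2.1.symm⟩
      rcases mem_insert.1 hw with rfl | hw
      · exact ⟨(not_mem_Mv hu e heP).2.symm, (not_mem_Mv hu f hfP).2.symm⟩
      rcases mem_insert.1 hw with rfl | hw
      · exact ⟨(not_mem_Mv ha e heP).2.symm, (not_mem_Mv ha f hfP).2.symm⟩
      · rw [mem_singleton] at hw; subst hw
        exact ⟨hd.2.2.1, (hP.1 f hfP).ne'⟩)
    have hRsub : ({e, f} : Finset (W × W)) ⊆ P := by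
      intro g hg
      rcases mem_insert.1 hg with rfl | hg
      · exact heP
      · rw [mem_singleton] at hg; subst hg; exact hfP
    have heR : e ∈ ({e, f} : Finset (W × W)) := mem_insert_self _ _
    have hfR : f ∈ ({e, f} : Finset (W × W)) := mem_insert_of_mem (mem_singleton_self f)
    refine swap_lemma hP hmax hRsub hQ2 ?_ ?_
    · intro w hw
      rw [hv2, hv1, hv0] at hw
      rcases mem_insert.1 hw with rfl | hw
      · exact Or.inl (mem_Mv_of_mem heR).2
      rcases mem_insert.1 hw with rfl | hw
      · exact Or.inl (mem_Mv_of_mem hfR).2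
      rcases mem_insert.1 hw with rfl | hw
      · exact Or.inl (mem_Mv_of_mem heR).1
      rcases mem_insert.1 hw with rfl | hw
      · exact Or.inr hu
      rcases mem_insert.1 hw with rfl | hw
      · exact Or.inr ha
      · rw [mem_singleton] at hw; subst hw
        exact Or.inl (mem_Mv_of_mem hfR).1
    · have hle : ({e, f} : Finset (W × W)).card ≤ 2 :=
        (card_insert_le _ _).trans (by rw [card_singleton])
      omega
  have F5iii : ∀ e ∈ P, e ∉ D → ∀ f ∈ D, ∀ u : W, u ∉ Mv P →
      H.Adj e.2 u → H.Adj e.1 f.2 → False := by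
    intro e heP heD f hf u hu h1 h2
    obtain ⟨hfP, hfa⟩ := (memD f).1 hf
    have hef : e ≠ f := by rintro rfl; exact heD hf
    have hd := hP.2 e heP f hfP hef
    have hua : u ≠ a := by
      rintro rfl
      exact hor e heP h1.symm
    obtain ⟨hQ0, hc0, hv0⟩ := isM_single hfa
    obtain ⟨hQ1, hc1, hv1⟩ := isM_insert hQ0 h1 (by
      intro w hw
      rw [hv0] at hw
      rcases mem_insert.1 hw with rfl | hw
      · exact ⟨(not_mem_Mv ha e heP).2.symm, hua⟩
      · rw [mem_singleton] at hw; subst hw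
        exact ⟨hd.2.2.1, (not_mem_Mv hu f hfP).1⟩)
    obtain ⟨hQ2, hc2, hv2⟩ := isM_insert hQ1 h2 (by
      intro w hw
      rw [hv1, hv0] at hw
      rcases mem_insert.1 hw with rfl | hw
      · exact ⟨(hP.1 e heP).ne, hd.2.2.2.symm⟩
      rcases mem_insert.1 hw with rfl | hw
      · exact ⟨(not_mem_Mv hu e heP).1.symm, (not_mem_Mv hu f hfP).2.symm⟩
      rcases mem_insert.1 hw with rfl | hw
      · exact ⟨(not_mem_Mv ha e heP).1.symm, (not_mem_Mv ha f hfP).2.symm⟩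
      · rw [mem_singleton] at hw; subst hw
        exact ⟨hd.1, (hP.1 f hfP).ne'⟩)
    have hRsub : ({e, f} : Finset (W × W)) ⊆ P := by
      intro g hg
      rcases mem_insert.1 hg with rfl | hg
      · exact heP
      · rw [mem_singleton] at hg; subst hg; exact hfP
    have heR : e ∈ ({e, f} : Finset (W × W)) := mem_insert_self _ _
    have hfR : f ∈ ({e, f} : Finset (W × W)) := mem_insert_of_mem (mem_singleton_self f)
    refine swap_lemma hP hmax hRsub hQ2 ?_ ?_
    · intro w hw
      rw [hv2, hv1, hv0] at hw
      rcases mem_insert.1 hw with rfl | hw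
      · exact Or.inl (mem_Mv_of_mem heR).1
      rcases mem_insert.1 hw with rfl | hw
      · exact Or.inl (mem_Mv_of_mem hfR).2
      rcases mem_insert.1 hw with rfl | hw
      · exact Or.inl (mem_Mv_of_mem heR).2
      rcases mem_insert.1 hw with rfl | hw
      · exact Or.inr hu
      rcases mem_insert.1 hw with rfl | hw
      · exact Or.inr ha
      · rw [mem_singleton] at hw; subst hw
        exact Or.inl (mem_Mv_of_mem hfR).1
    · have hle : ({e, f} : Finset (W × W)).card ≤ 2 :=
        (card_insert_le _ _).trans (by rw [card_singleton])
      omega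
  have build4 : ∀ e ∈ P, e ∉ D → ∀ f ∈ D, ∀ f' ∈ D, f ≠ f' →
      H.Adj e.1 f.2 → H.Adj e.2 f'.2 → ∀ c1 c2 : W, c1 ∉ Mv P → c2 ∉ Mv P → c1 ≠ c2 →
      H.Adj c1 f.1 → H.Adj c2 f'.1 → False := by
    intro e heP heD f hf f' hf' hff' h1 h2 c1 c2 hc1 hc2 hc12 hbc1 hbc2
    obtain ⟨hfP, hfa⟩ := (memD f).1 hf
    obtain ⟨hf'P, hf'a⟩ := (memD f').1 hf'
    have hef : e ≠ f := by rintro rfl; exact heD hf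
    have hef' : e ≠ f' := by rintro rfl; exact heD hf'
    have hdef := hP.2 e heP f hfP hef
    have hdef' := hP.2 e heP f' hf'P hef'
    have hd' := hP.2 f hfP f' hf'P hff'
    obtain ⟨hQ0, hc0, hv0⟩ := isM_single hbc2
    obtain ⟨hQ1, hc1', hv1⟩ := isM_insert hQ0 hbc1 (by
      intro w hw
      rw [hv0] at hw
      rcases mem_insert.1 hw with rfl | hw
      · exact ⟨hc12, (not_mem_Mv hc2 f hfP).1.symm⟩
      · rw [mem_singleton] at hw; subst hw
        exact ⟨(not_mem_Mv hc1 f' hf'P).1, hd'.1⟩)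
    obtain ⟨hQ2, hc2', hv2⟩ := isM_insert hQ1 h2 (by
      intro w hw
      rw [hv1, hv0] at hw
      rcases mem_insert.1 hw with rfl | hw
      · exact ⟨(not_mem_Mv hc1 e heP).2.symm, (not_mem_Mv hc1 f' hf'P).2.symm⟩
      rcases mem_insert.1 hw with rfl | hw
      · exact ⟨hdef.2.2.1, hd'.2.1.symm⟩
      rcases mem_insert.1 hw with rfl | hw
      · exact ⟨(not_mem_Mv hc2 e heP).2.symm, (not_mem_Mv hc2 f' hf'P).2.symm⟩
      · rw [mem_singleton] at hw; subst hw
        exact ⟨hdef'.2.2.1, (hP.1 f' hf'P).ne'⟩)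
    obtain ⟨hQ3, hc3', hv3⟩ := isM_insert hQ2 h1 (by
      intro w hw
      rw [hv2, hv1, hv0] at hw
      rcases mem_insert.1 hw with rfl | hw
      · exact ⟨(hP.1 e heP).ne, hdef.2.2.2.symm⟩
      rcases mem_insert.1 hw with rfl | hw
      · exact ⟨hdef'.2.1, hd'.2.2.2⟩
      rcases mem_insert.1 hw with rfl | hw
      · exact ⟨(not_mem_Mv hc1 e heP).1.symm, (not_mem_Mv hc1 f hfP).2.symm⟩
      rcases mem_insert.1 hw with rfl | hw
      · exact ⟨hdef.1, (hP.1 f hfP).ne'⟩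
      rcases mem_insert.1 hw with rfl | hw
      · exact ⟨(not_mem_Mv hc2 e heP).1.symm, (not_mem_Mv hc2 f hfP).2.symm⟩
      · rw [mem_singleton] at hw; subst hw
        exact ⟨hdef'.1, hd'.2.2.1⟩)
    have hRsub : ({e, f, f'} : Finset (W × W)) ⊆ P := by
      intro g hg
      rcases mem_insert.1 hg with rfl | hg
      · exact heP
      rcases mem_insert.1 hg with rfl | hg
      · exact hfP
      · rw [mem_singleton] at hg; subst hg; exact hf'P
    have heR : e ∈ ({e, f, f'} : Finset (W × W)) := mem_insert_self _ _
    have hfR : f ∈ ({e, f, f'} : Finset (W × W)) :=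
      mem_insert_of_mem (mem_insert_self _ _)
    have hf'R : f' ∈ ({e, f, f'} : Finset (W × W)) :=
      mem_insert_of_mem (mem_insert_of_mem (mem_singleton_self f'))
    refine swap_lemma hP hmax hRsub hQ3 ?_ ?_
    · intro w hw
      rw [hv3, hv2, hv1, hv0] at hw
      rcases mem_insert.1 hw with rfl | hw
      · exact Or.inl (mem_Mv_of_mem heR).1
      rcases mem_insert.1 hw with rfl | hw
      · exact Or.inl (mem_Mv_of_mem hfR).2
      rcases mem_insert.1 hw with rfl | hw
      · exact Or.inl (mem_Mv_of_mem heR).2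
      rcases mem_insert.1 hw with rfl | hw
      · exact Or.inl (mem_Mv_of_mem hf'R).2
      rcases mem_insert.1 hw with rfl | hw
      · exact Or.inr hc1
      rcases mem_insert.1 hw with rfl | hw
      · exact Or.inl (mem_Mv_of_mem hfR).1
      rcases mem_insert.1 hw with rfl | hw
      · exact Or.inr hc2
      · rw [mem_singleton] at hw; subst hw
        exact Or.inl (mem_Mv_of_mem hf'R).1
    · have hle : ({e, f, f'} : Finset (W × W)).card ≤ 3 :=
        (card_insert_le _ _).trans (Nat.succ_le_succ
          ((card_insert_le _ _).trans (by rw [card_singleton])))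
      omega
  have F5iv : ∀ e ∈ P, e ∉ D → ∀ f ∈ D, ∀ f' ∈ D,
      H.Adj e.1 f.2 → H.Adj e.2 f'.2 → False := by
    intro e heP heD f hf f' hf' h1 h2
    by_cases hff' : f = f'
    · subst hff'
      exact hT (hP.1 e heP) h2 h1
    · rcases hbmiss f hf f' hf' hff' with h | h
      · exact build4 e heP heD f hf f' hf' hff' h1 h2 b a hb ha hab.symm h
          ((memD f').1 hf').2
      · exact build4 e heP heD f hf f' hf' hff' h1 h2 a b ha hb hab
          ((memD f).1 hf).2 h
  -- selection function
  set g : W × W → W := fun e =>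
    if H.Adj a e.1 then e.2
    else if (∃ u, u ∉ Mv P ∧ H.Adj e.1 u) ∨ (∃ f ∈ D, H.Adj e.1 f.2) then e.2 else e.1
    with hg
  have hgD : ∀ e ∈ D, g e = e.2 := by
    intro e he
    rw [hg]; dsimp only; rw [if_pos ((memD e).1 he).2]
  have hgood : ∀ e ∈ P, (g e = e.1 ∨ g e = e.2) ∧
      (∀ u, u ∉ Mv P → ¬ H.Adj (g e) u) ∧ (∀ f ∈ D, ¬ H.Adj (g e) f.2) := by
    intro e heP
    by_cases hae : H.Adj a e.1
    · have heD : e ∈ D := (memD e).2 ⟨heP, hae⟩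
      rw [hgD e heD]
      exact ⟨Or.inr rfl, fun u hu h => hwnotU e heD u hu h, fun f hf h => F4 e heD f hf h⟩
    · have heD : e ∉ D := fun h => hae ((memD e).1 h).2
      by_cases hbad : (∃ u, u ∉ Mv P ∧ H.Adj e.1 u) ∨ (∃ f ∈ D, H.Adj e.1 f.2)
      · have hgeq : g e = e.2 := by rw [hg]; dsimp only; rw [if_neg hae, if_pos hbad]
        rw [hgeq]
        refine ⟨Or.inr rfl, ?_, ?_⟩
        · intro u hu h
          rcases hbad with ⟨u1, hu1, h1⟩ | ⟨f, hf, h1⟩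
          · exact F5i e heP heD u1 u hu1 hu h1 h
          · exact F5iii e heP heD f hf u hu h h1
        · intro f' hf' h
          rcases hbad with ⟨u1, hu1, h1⟩ | ⟨f, hf, h1⟩
          · exact F5ii e heP heD f' hf' u1 hu1 h1 h
          · exact F5iv e heP heD f hf f' hf' h1 h
      · have hgeq : g e = e.1 := by rw [hg]; dsimp only; rw [if_neg hae, if_neg hbad]
        push_neg at hbad
        rw [hgeq]
        exact ⟨Or.inl rfl, fun u hu h => hbad.1 u hu h, fun f hf h => hbad.2 f hf h⟩
  set s := (univ \ Mv P) ∪ P.image g with hs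
  have hind : Ind H s := by
    intro u hu v hv hadj
    rw [hs, mem_union] at hu hv
    rcases hu with hu | hu <;> rcases hv with hv | hv
    · exact uind u v (mem_sdiff.1 hu).2 (mem_sdiff.1 hv).2 hadj
    · obtain ⟨e, heP, rfl⟩ := mem_image.1 hv
      exact (hgood e heP).2.1 u (mem_sdiff.1 hu).2 hadj.symm
    · obtain ⟨e, heP, rfl⟩ := mem_image.1 hu
      exact (hgood e heP).2.1 v (mem_sdiff.1 hv).2 hadj
    · obtain ⟨e, heP, rfl⟩ := mem_image.1 hu
      obtain ⟨f, hfP, rfl⟩ := mem_image.1 hv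
      by_cases hef : e = f
      · subst hef; exact H.irrefl hadj
      · by_cases hfD : f ∈ D
        · have hne := (hgood e heP).2.2 f hfD
          rw [hgD f hfD] at hadj
          exact hne hadj
        · by_cases heD : e ∈ D
          · have hne := (hgood f hfP).2.2 e heD
            rw [hgD e heD] at hadj
            exact hne hadj.symm
          · exact hef (hPD1 e heP f hfP heD hfD)
  have himg : ∀ e ∈ P, g e ∈ Mv P := by
    intro e heP
    rcases (hgood e heP).1 with h | h <;> rw [h]
    · exact (mem_Mv_of_mem heP).1
    · exact (mem_Mv_of_mem heP).2
  have hinjg : Set.InjOn g ↑P := by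
    intro e he f hf heq
    rw [Finset.mem_coe] at he hf
    by_contra hne
    have hd := hP.2 e he f hf hne
    rcases (hgood e he).1 with h1 | h1 <;> rcases (hgood f hf).1 with h2 | h2 <;>
      rw [h1, h2] at heq
    · exact hd.1 heq
    · exact hd.2.1 heq
    · exact hd.2.2.1 heq
    · exact hd.2.2.2 heq
  have hdisjs : Disjoint (univ \ Mv P) (P.image g) := by
    rw [disjoint_right]
    intro w hw hw'
    obtain ⟨e, heP, rfl⟩ := mem_image.1 hw
    exact (mem_sdiff.1 hw').2 (himg e heP)
  have hcards : s.card = (univ \ Mv P).card + P.card := by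
    rw [hs, card_union_of_disjoint hdisjs, card_image_of_injOn hinjg]
  have hcardU : (univ \ Mv P).card + (Mv P).card = Fintype.card W :=
    by rw [card_sdiff_add_card_eq_card (subset_univ _), card_univ]
  have hMv := card_Mv hP
  exact ⟨s, hind, by omega⟩

theorem master (hT : TFree H) (hbig : H.minDegree + 10 ≤ Fintype.card W) :
    ∃ (P : Finset (W × W)) (s : Finset W), IsM H P ∧ Ind H s ∧
      (H.minDegree + 2 ≤ P.card ∨ Fintype.card W ≤ P.card + s.card) := by
  classical
  obtain ⟨P, hP, hmax⟩ := exists_max_matching H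
  by_cases h1 : H.minDegree + 2 ≤ P.card
  · exact ⟨P, ∅, hP, fun u hu => absurd hu (notMem_empty u), Or.inl h1⟩
  push_neg at h1
  have ht : P.card ≤ H.minDegree + 1 := by omega
  have hMv := card_Mv hP
  have hUcard : (univ \ Mv P).card + (Mv P).card = Fintype.card W := by
    rw [card_sdiff_add_card_eq_card (subset_univ _), card_univ]
  by_cases h2 : 2 ≤ (univ \ Mv P).card
  · obtain ⟨a, ha, b, hb, hab⟩ := Finset.one_lt_card.1 h2
    have ha' : a ∉ Mv P := (mem_sdiff.1 ha).2
    have hb' : b ∉ Mv P := (mem_sdiff.1 hb).2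
    obtain ⟨P', hP', hcard', hMv', hor'⟩ := orient hT hP a ha'
    have hmax' : ∀ Q, IsM H Q → Q.card ≤ P'.card := by
      intro Q hQ; rw [hcard']; exact hmax Q hQ
    obtain ⟨s, hs, hcard⟩ := caseU2 hT hP' hmax' H.minDegree
      (fun v => H.minDegree_le_degree v) (by rw [hcard']; exact ht)
      (hMv' ▸ ha') (hMv' ▸ hb') hab hor'
    exact ⟨P', s, hP', hs, Or.inr hcard⟩
  · have hn : Fintype.card W ≤ 2 * P.card + 1 := by omega
    have h8 : 8 ≤ P.card := by omega
    have hdeg : ∀ v, P.card ≤ H.degree v + 1 := fun v => by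
      have := H.minDegree_le_degree v; omega
    obtain ⟨s, hs, hcard⟩ := direct hT P.card h8 hdeg hn
    exact ⟨P, s, hP, hs, Or.inr hcard⟩

end BK

open BK

theorem borodin_kostochka_3K1_free
    {V : Type*} [Fintype V]
    (G : SimpleGraph V) [DecidableRel G.Adj]
    (hΔ : 9 ≤ G.maxDegree)
    (hfree : ¬ Nonempty ((⊥ : SimpleGraph (Fin 3)) ↪g G)) :
    G.chromaticNumber ≤ (↑(max (G.maxDegree - 1) G.cliqueNum) : ℕ∞) := by
  classical
  have hVne : Nonempty V := by
    by_contra h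
    rw [not_nonempty_iff] at h
    have h0 : G.maxDegree ≤ 0 := G.maxDegree_le_of_forall_degree_le 0 (fun v => (h.false v).elim)
    omega
  -- triangle-freeness of the complement
  have hT : TFree (Gᶜ) := by
    intro u v w h1 h2 h3
    rw [compl_adj] at h1 h2 h3
    apply hfree
    have hno : ∀ x y : V, (x = u ∨ x = v ∨ x = w) → (y = u ∨ y = v ∨ y = w) →
        ¬ G.Adj x y := by
      rintro x y (rfl | rfl | rfl) (rfl | rfl | rfl) hadj
      · exact G.irrefl hadj
      · exact h1.2 hadj
      · exact h3.2 hadj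
      · exact h1.2 hadj.symm
      · exact G.irrefl hadj
      · exact h2.2 hadj
      · exact h3.2 hadj.symm
      · exact h2.2 hadj.symm
      · exact G.irrefl hadj
    have hmem : ∀ i : Fin 3,
        (if i.val = 0 then u else if i.val = 1 then v else w) = u ∨
        (if i.val = 0 then u else if i.val = 1 then v else w) = v ∨
        (if i.val = 0 then u else if i.val = 1 then v else w) = w := by
      intro i; fin_cases i <;> simp
    refine ⟨⟨⟨fun i => if i.val = 0 then u else if i.val = 1 then v else w, ?_⟩, ?_⟩⟩
    · intro i j hij
      fin_cases i <;> fin_cases j <;> norm_num at hij ⊢ <;>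
        first
          | exact absurd hij h1.1 | exact absurd hij h3.1 | exact absurd hij h2.1
          | exact absurd hij (Ne.symm h1.1) | exact absurd hij (Ne.symm h3.1)
          | exact absurd hij (Ne.symm h2.1)
    · intro i j
      constructor
      · intro hadj
        exact absurd hadj (hno _ _ (hmem i) (hmem j))
      · intro habs
        simp at habs
  -- a matching in the complement yields a colouring
  have hcolor : ∀ P : Finset (V × V), IsM (Gᶜ) P →
      G.Colorable (Fintype.card V - P.card) := by
    intro P hP
    have hsndinj : Set.InjOn (Prod.snd : V × V → V) ↑P := by
      intro p hp q hq heq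
      by_contra hne
      exact (hP.2 p hp q hq hne).2.2.2 heq
    obtain ⟨T, hTdef⟩ : ∃ T, T = (univ : Finset V) \ P.image Prod.snd := ⟨_, rfl⟩
    have hTcard : T.card = Fintype.card V - P.card := by
      rw [hTdef, card_sdiff_of_subset (subset_univ _), card_univ, card_image_of_injOn hsndinj]
    obtain ⟨c, hcdef⟩ : ∃ c : V → V,
        c = fun v => if h : ∃ p ∈ P, p.2 = v then h.choose.1 else v := ⟨_, rfl⟩
    have hcpair : ∀ v, (h : ∃ p ∈ P, p.2 = v) → ∃ p ∈ P, p.2 = v ∧ c v = p.1 := by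
      intro v h
      refine ⟨h.choose, h.choose_spec.1, h.choose_spec.2, ?_⟩
      rw [hcdef]; dsimp only; rw [dif_pos h]
    have hcid : ∀ v, (¬ ∃ p ∈ P, p.2 = v) → c v = v := by
      intro v h
      rw [hcdef]; dsimp only; rw [dif_neg h]
    have hcT : ∀ v, c v ∈ T := by
      intro v
      rw [hTdef, mem_sdiff]
      refine ⟨mem_univ _, fun hmem => ?_⟩
      obtain ⟨q, hq, hq2⟩ := mem_image.1 hmem
      by_cases h : ∃ p ∈ P, p.2 = v
      · obtain ⟨p, hp, hp2, hpc⟩ := hcpair v h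
        rw [hpc] at hq2
        by_cases hpq : p = q
        · subst hpq
          exact (hP.1 p hp).ne hq2.symm
        · exact (hP.2 p hp q hq hpq).2.1 hq2.symm
      · rw [hcid v h] at hq2
        exact h ⟨q, hq, hq2⟩
    have hvalid : ∀ {v w : V}, G.Adj v w → c v ≠ c w := by
      intro v w hadj heq
      by_cases h1 : ∃ p ∈ P, p.2 = v <;> by_cases h2 : ∃ p ∈ P, p.2 = w
      · obtain ⟨p, hp, hp2, hpc⟩ := hcpair v h1
        obtain ⟨q, hq, hq2, hqc⟩ := hcpair w h2
        rw [hpc, hqc] at heq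
        by_cases hpq : p = q
        · subst hpq
          rw [← hp2, ← hq2] at hadj
          exact G.irrefl hadj
        · exact (hP.2 p hp q hq hpq).1 heq
      · obtain ⟨p, hp, hp2, hpc⟩ := hcpair v h1
        rw [hpc, hcid w h2] at heq
        have hcomp := hP.1 p hp
        rw [compl_adj] at hcomp
        rw [heq, hp2] at hcomp
        exact hcomp.2 hadj.symm
      · obtain ⟨q, hq, hq2, hqc⟩ := hcpair w h2
        rw [hqc, hcid v h1] at heq
        have hcomp := hP.1 q hq
        rw [compl_adj] at hcomp
        rw [← heq, hq2] at hcomp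
        exact hcomp.2 hadj
      · rw [hcid v h1, hcid w h2] at heq
        exact hadj.ne heq
    have hcoloring : G.Coloring ↥(T : Finset V) :=
      SimpleGraph.Coloring.mk (fun v => ⟨c v, hcT v⟩)
        (fun hadj heq => hvalid hadj (congrArg Subtype.val heq))
    have := hcoloring.colorable
    rwa [Fintype.card_coe, hTcard] at this
  -- independent sets in the complement are cliques
  have hclique : ∀ s : Finset V, Ind (Gᶜ) s → s.card ≤ G.cliqueNum := by
    intro s hs
    have hcl : G.IsClique ↑s := by
      intro u hu v hv hne
      by_contra hnadj
      exact hs u hu v hv ((compl_adj G u v).2 ⟨hne, hnadj⟩)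
    exact IsClique.card_le_cliqueNum (tc := hcl)
  -- degree bookkeeping
  have hdegc : ∀ v, (Gᶜ).degree v = Fintype.card V - 1 - G.degree v := fun v =>
    degree_compl G v
  have hminlb : Fintype.card V - 1 - G.maxDegree ≤ (Gᶜ).minDegree := by
    apply le_minDegree_of_forall_le_degree
    intro v
    rw [hdegc v]
    exact Nat.sub_le_sub_left (G.degree_le_maxDegree v) _
  have hminub : (Gᶜ).minDegree ≤ Fintype.card V - 1 - G.maxDegree := by
    obtain ⟨v0, hv0⟩ := G.exists_maximal_degree_vertex
    have := (Gᶜ).minDegree_le_degree v0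
    rw [hdegc v0, ← hv0] at this
    exact this
  have hlt := G.maxDegree_lt_card_verts
  have hbig : (Gᶜ).minDegree + 10 ≤ Fintype.card V := by omega
  obtain ⟨P, s, hP, hs, hdisj⟩ := master hT hbig
  have hχ : G.chromaticNumber ≤ ((Fintype.card V - P.card : ℕ) : ℕ∞) :=
    (hcolor P hP).chromaticNumber_le
  refine hχ.trans (Nat.cast_le.mpr ?_)
  rcases hdisj with h | h
  · refine le_max_of_le_left ?_
    omega
  · refine le_max_of_le_right ?_
    have := hclique s hs
    omega
end
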